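/- arXiv:1202.0757 — 6 statements merged into one kernel-verified Lean document; each statement's English description precedes it below -/
import Mathlib

section
/- Let Ω be an open subset of ℝ^P and let F : Ω → ℝ^{M×N} be entrywise C¹ with the columns of F(x) spanning ℝ^M for every x ∈ Ω. Define Π(x) := I − Fᵀ(x)(F(x)Fᵀ(x))⁻¹F(x) and Π_p(x) := Fᵀ(x)(F(x)Fᵀ(x))⁻¹ (∂F/∂x_p)(x). Then for every p = 1,…,P and every x ∈ Ω, ∂Π/∂x_p(x) = −Π(x)Π_p(x)ᵀ − Π_p(x)Π(x). -/
open Matrix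

/-- Entrywise partial derivative of a matrix-valued function with respect to the `p`-th
coordinate. -/
noncomputable def matPartialDeriv {P M N : ℕ} (F : (Fin P → ℝ) → Matrix (Fin M) (Fin N) ℝ)
    (p : Fin P) (x : Fin P → ℝ) : Matrix (Fin M) (Fin N) ℝ :=
  Matrix.of fun i j => fderiv ℝ (fun y => F y i j) x (Pi.single p 1)

/-- `Π(x) := I − Fᵀ(x)(F(x)Fᵀ(x))⁻¹F(x)`. -/
noncomputable def projMat {P M N : ℕ} (F : (Fin P → ℝ) → Matrix (Fin M) (Fin N) ℝ)
    (x : Fin P → ℝ) : Matrix (Fin N) (Fin N) ℝ :=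
  1 - (F x)ᵀ * (F x * (F x)ᵀ)⁻¹ * F x

/-- `Π_p(x) := Fᵀ(x)(F(x)Fᵀ(x))⁻¹ (∂F/∂x_p)(x)`. -/
noncomputable def projMatP {P M N : ℕ} (F : (Fin P → ℝ) → Matrix (Fin M) (Fin N) ℝ)
    (p : Fin P) (x : Fin P → ℝ) : Matrix (Fin N) (Fin N) ℝ :=
  (F x)ᵀ * (F x * (F x)ᵀ)⁻¹ * matPartialDeriv F p x

lemma matPD_congr {P M N : ℕ} {f g : (Fin P → ℝ) → Matrix (Fin M) (Fin N) ℝ} {x : Fin P → ℝ}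
    (h : f =ᶠ[nhds x] g) (p : Fin P) : matPartialDeriv f p x = matPartialDeriv g p x := by
  ext i j
  simp only [matPartialDeriv, of_apply]
  rw [Filter.EventuallyEq.fderiv_eq (h.mono fun y hy => by rw [hy])]

lemma matPD_const {P M N : ℕ} (C : Matrix (Fin M) (Fin N) ℝ) (p : Fin P) (x : Fin P → ℝ) :
    matPartialDeriv (fun _ => C) p x = 0 := by
  ext i j; simp [matPartialDeriv]

lemma matPD_transpose {P M N : ℕ} (F : (Fin P → ℝ) → Matrix (Fin M) (Fin N) ℝ)
    (p : Fin P) (x : Fin P → ℝ) :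
    matPartialDeriv (fun y => (F y)ᵀ) p x = (matPartialDeriv F p x)ᵀ := by
  ext i j; simp [matPartialDeriv]

lemma diffAt_mul_entry {P M N K : ℕ} {A : (Fin P → ℝ) → Matrix (Fin M) (Fin N) ℝ}
    {B : (Fin P → ℝ) → Matrix (Fin N) (Fin K) ℝ} {x : Fin P → ℝ}
    (hA : ∀ i j, DifferentiableAt ℝ (fun y => A y i j) x)
    (hB : ∀ i j, DifferentiableAt ℝ (fun y => B y i j) x) (i : Fin M) (j : Fin K) :
    DifferentiableAt ℝ (fun y => (A y * B y) i j) x := by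
  simp only [Matrix.mul_apply]
  exact DifferentiableAt.fun_sum fun k _ => (hA i k).mul (hB k j)

lemma matPD_mul {P M N K : ℕ} {A : (Fin P → ℝ) → Matrix (Fin M) (Fin N) ℝ}
    {B : (Fin P → ℝ) → Matrix (Fin N) (Fin K) ℝ} {x : Fin P → ℝ}
    (hA : ∀ i j, DifferentiableAt ℝ (fun y => A y i j) x)
    (hB : ∀ i j, DifferentiableAt ℝ (fun y => B y i j) x) (p : Fin P) :
    matPartialDeriv (fun y => A y * B y) p x
      = matPartialDeriv A p x * B x + A x * matPartialDeriv B p x := by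
  ext i j
  simp only [matPartialDeriv, of_apply, Matrix.add_apply, Matrix.mul_apply]
  have h : HasFDerivAt (fun y => ∑ k, A y i k * B y k j)
      (∑ k : Fin N, (A x i k • fderiv ℝ (fun y => B y k j) x
        + B x k j • fderiv ℝ (fun y => A y i k) x)) x :=
    HasFDerivAt.fun_sum fun k _ => (hA i k).hasFDerivAt.mul (hB k j).hasFDerivAt
  rw [h.fderiv]
  simp only [ContinuousLinearMap.coe_sum', Finset.sum_apply, ContinuousLinearMap.add_apply,
    ContinuousLinearMap.coe_smul', Pi.smul_apply, smul_eq_mul]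
  rw [Finset.sum_add_distrib, add_comm]
  congr 1
  exact Finset.sum_congr rfl fun k _ => mul_comm _ _

lemma diffAt_det {P n : ℕ} {A : (Fin P → ℝ) → Matrix (Fin n) (Fin n) ℝ} {x : Fin P → ℝ}
    (h : ∀ i j, DifferentiableAt ℝ (fun y => A y i j) x) :
    DifferentiableAt ℝ (fun y => (A y).det) x := by
  simp only [Matrix.det_apply']
  refine DifferentiableAt.fun_sum fun σ _ => DifferentiableAt.const_mul ?_ _
  exact (HasFDerivAt.finset_prod (fun i _ => (h (σ i) i).hasFDerivAt)).differentiableAt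

lemma diffAt_inv_entry {P n : ℕ} {A : (Fin P → ℝ) → Matrix (Fin n) (Fin n) ℝ} {x : Fin P → ℝ}
    (h : ∀ i j, DifferentiableAt ℝ (fun y => A y i j) x) (hdet : (A x).det ≠ 0)
    (i j : Fin n) : DifferentiableAt ℝ (fun y => (A y)⁻¹ i j) x := by
  have hrw : (fun y => (A y)⁻¹ i j) = fun y => ((A y).det)⁻¹ * (A y).adjugate i j := by
    funext y
    rw [Matrix.inv_def, Ring.inverse_eq_inv, Matrix.smul_apply, smul_eq_mul]
  rw [hrw]
  refine DifferentiableAt.mul ((diffAt_det h).inv hdet) ?_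
  simp only [Matrix.adjugate_apply]
  refine diffAt_det fun k l => ?_
  simp only [Matrix.updateRow_apply]
  by_cases hk : k = j <;> simp [hk, h]

lemma det_ne_zero_of_span {M N : ℕ} (A : Matrix (Fin M) (Fin N) ℝ)
    (h : Submodule.span ℝ (Set.range (fun n : Fin N => fun m : Fin M => A m n)) = ⊤) :
    (A * Aᵀ).det ≠ 0 := by
  intro hdet
  obtain ⟨v, hv0, hv⟩ := (Matrix.exists_mulVec_eq_zero_iff).mpr hdet
  have hw : Aᵀ *ᵥ v = 0 := by
    have h3 := congr_arg (dotProduct v) hv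
    rw [← Matrix.mulVec_mulVec, Matrix.dotProduct_mulVec, ← Matrix.mulVec_transpose,
      dotProduct_zero] at h3
    exact dotProduct_self_eq_zero.mp h3
  have hcol : ∀ u, u ∈ Submodule.span ℝ
      (Set.range (fun n : Fin N => fun m : Fin M => A m n)) → v ⬝ᵥ u = 0 := by
    intro u hu
    induction hu using Submodule.span_induction with
    | mem u hu =>
      obtain ⟨n, rfl⟩ := hu
      have := congrFun hw n
      simpa [Matrix.mulVec, dotProduct, mul_comm] using this
    | zero => simp
    | add a b _ _ ha hb => simp [dotProduct_add, ha, hb]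
    | smul r a _ ha => simp [dotProduct_smul, ha]
  exact hv0 (dotProduct_self_eq_zero.mp (hcol v (h ▸ Submodule.mem_top)))

lemma key_algebra {M N : ℕ} (A B : Matrix (Fin M) (Fin N) ℝ) (H : Matrix (Fin M) (Fin M) ℝ)
    (hH : Hᵀ = H) :
    -((Bᵀ * H + Aᵀ * -(H * (B * Aᵀ + A * Bᵀ) * H)) * A + Aᵀ * H * B)
      = -((1 - Aᵀ * H * A) * (Aᵀ * H * B)ᵀ) - Aᵀ * H * B * (1 - Aᵀ * H * A) := by
  simp only [Matrix.transpose_mul, Matrix.transpose_transpose, hH, Matrix.mul_add,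
    Matrix.add_mul, Matrix.mul_sub, Matrix.sub_mul, Matrix.mul_one, Matrix.one_mul,
    Matrix.neg_mul, Matrix.mul_neg, Matrix.mul_assoc, neg_add_rev, neg_neg, neg_sub,
    sub_eq_add_neg]
  abel

/-- If `F : Ω → ℝ^{M×N}` is entrywise `C¹` on an open `Ω ⊆ ℝ^P` with the
columns of `F(x)` spanning `ℝ^M` for all `x ∈ Ω`, then
`∂Π/∂x_p(x) = −Π(x)Π_p(x)ᵀ − Π_p(x)Π(x)` for every `p` and `x ∈ Ω`. -/
theorem stmt4 {P M N : ℕ} {Ω : Set (Fin P → ℝ)} (hΩ : IsOpen Ω)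
    (F : (Fin P → ℝ) → Matrix (Fin M) (Fin N) ℝ)
    (hF : ∀ i j, ContDiffOn ℝ 1 (fun x => F x i j) Ω)
    (hspan : ∀ x ∈ Ω,
      Submodule.span ℝ (Set.range (fun n : Fin N => fun m : Fin M => F x m n)) = ⊤) :
    ∀ x ∈ Ω, ∀ p : Fin P,
      matPartialDeriv (projMat F) p x
        = -(projMat F x * (projMatP F p x)ᵀ) - projMatP F p x * projMat F x := by
  intro x hx p
  have hd : ∀ i j, DifferentiableAt ℝ (fun y => F y i j) x := fun i j =>
    (((hF i j).differentiableOn one_ne_zero) x hx).differentiableAt (hΩ.mem_nhds hx)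
  have hdT : ∀ i j, DifferentiableAt ℝ (fun y => (F y)ᵀ i j) x := fun i j => hd j i
  have hdg : ∀ i j, DifferentiableAt ℝ (fun y => (F y * (F y)ᵀ) i j) x :=
    diffAt_mul_entry hd hdT
  have hdet : (F x * (F x)ᵀ).det ≠ 0 := det_ne_zero_of_span (F x) (hspan x hx)
  have hdinv : ∀ i j, DifferentiableAt ℝ (fun y => (F y * (F y)ᵀ)⁻¹ i j) x :=
    diffAt_inv_entry hdg hdet
  have hdTi : ∀ i j, DifferentiableAt ℝ (fun y => ((F y)ᵀ * (F y * (F y)ᵀ)⁻¹) i j) x :=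
    diffAt_mul_entry hdT hdinv
  have hdQ : ∀ i j, DifferentiableAt ℝ (fun y => ((F y)ᵀ * (F y * (F y)ᵀ)⁻¹ * F y) i j) x :=
    diffAt_mul_entry hdTi hd
  have hDg : matPartialDeriv (fun y => F y * (F y)ᵀ) p x
      = matPartialDeriv F p x * (F x)ᵀ + F x * (matPartialDeriv F p x)ᵀ := by
    rw [matPD_mul hd hdT, matPD_transpose]
  have hmulinv : (F x * (F x)ᵀ) * (F x * (F x)ᵀ)⁻¹ = 1 :=
    Matrix.mul_nonsing_inv _ (Ne.isUnit hdet)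
  have hDinv : matPartialDeriv (fun y => (F y * (F y)ᵀ)⁻¹) p x
      = -((F x * (F x)ᵀ)⁻¹ * (matPartialDeriv F p x * (F x)ᵀ
          + F x * (matPartialDeriv F p x)ᵀ) * (F x * (F x)ᵀ)⁻¹) := by
    have hconst : matPartialDeriv (fun y => (F y * (F y)ᵀ)⁻¹ * (F y * (F y)ᵀ)) p x = 0 := by
      have hc : ContinuousAt (fun y => (F y * (F y)ᵀ).det) x := (diffAt_det hdg).continuousAt
      have hev : (fun y => (F y * (F y)ᵀ)⁻¹ * (F y * (F y)ᵀ)) =ᶠ[nhds x]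
          (fun _ => (1 : Matrix (Fin M) (Fin M) ℝ)) := by
        filter_upwards [hc.eventually_ne hdet] with y hy
        exact Matrix.nonsing_inv_mul _ (Ne.isUnit hy)
      rw [matPD_congr hev, matPD_const]
    rw [matPD_mul hdinv hdg] at hconst
    have h2 := congrArg (fun X => X * (F x * (F x)ᵀ)⁻¹) hconst
    simp only [Matrix.add_mul, Matrix.mul_assoc, hmulinv, Matrix.mul_one,
      Matrix.zero_mul] at h2
    have h3 := eq_neg_of_add_eq_zero_left h2
    rw [h3, hDg, Matrix.mul_assoc]
  have hDQ : matPartialDeriv (fun y => (F y)ᵀ * (F y * (F y)ᵀ)⁻¹ * F y) p x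
      = ((matPartialDeriv F p x)ᵀ * (F x * (F x)ᵀ)⁻¹
          + (F x)ᵀ * -((F x * (F x)ᵀ)⁻¹ * (matPartialDeriv F p x * (F x)ᵀ
            + F x * (matPartialDeriv F p x)ᵀ) * (F x * (F x)ᵀ)⁻¹)) * F x
        + (F x)ᵀ * (F x * (F x)ᵀ)⁻¹ * matPartialDeriv F p x := by
    rw [matPD_mul hdTi hd, matPD_mul hdT hdinv, matPD_transpose, hDinv]
  have hmain : matPartialDeriv (projMat F) p x
      = -(matPartialDeriv (fun y => (F y)ᵀ * (F y * (F y)ᵀ)⁻¹ * F y) p x) := by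
    ext i j
    simp only [matPartialDeriv, of_apply, projMat, Matrix.sub_apply, Matrix.neg_apply]
    rw [fderiv_fun_sub (differentiableAt_const _) (hdQ i j)]
    simp
  have hHsymm : ((F x * (F x)ᵀ)⁻¹)ᵀ = (F x * (F x)ᵀ)⁻¹ := by
    rw [Matrix.transpose_nonsing_inv, Matrix.transpose_mul, Matrix.transpose_transpose]
  rw [hmain, hDQ]
  simp only [projMat, projMatP]
  exact key_algebra (F x) (matPartialDeriv F p x) _ hHsymm
end

section
/- Let Ω be an open subset of ℝ^P, let F : Ω → ℝ^{M×N} be entrywise C² with the columns of F(x) spanning ℝ^M for every x ∈ Ω, and let w ∈ ℝ^N. Define E(x) := ‖Π(x)w‖² where Π(x) := I − Fᵀ(x)(F(x)Fᵀ(x))⁻¹F(x), and Π_p(x) := Fᵀ(x)(F(x)Fᵀ(x))⁻¹ (∂F/∂x_p)(x). Then for every p = 1,…,P and every x ∈ Ω, the first partial derivative of E is ∂E/∂x_p(x) = −2⟨w, Π_p(x)Π(x)w⟩. -/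
open Matrix

attribute [local instance] Matrix.linftyOpNormedAddCommGroup Matrix.linftyOpNormedSpace
  Matrix.linftyOpNormedRing Matrix.linftyOpNormedAlgebra

section helpers

variable {E F G : Type*} [NormedAddCommGroup E] [NormedSpace ℝ E] [NormedAddCommGroup F]
  [NormedSpace ℝ F] [NormedAddCommGroup G] [NormedSpace ℝ G]
  [FiniteDimensional ℝ E] [FiniteDimensional ℝ F]

/-- Upgrade a bilinear map between finite dimensional spaces to a continuous bilinear map. -/
noncomputable def clm2 (B : E →ₗ[ℝ] F →ₗ[ℝ] G) : E →L[ℝ] F →L[ℝ] G :=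
  LinearMap.toContinuousLinearMap
    { toFun := fun e => LinearMap.toContinuousLinearMap (B e)
      map_add' := fun a b => by ext; simp
      map_smul' := fun a b => by ext; simp }

@[simp] lemma clm2_apply (B : E →ₗ[ℝ] F →ₗ[ℝ] G) (e : E) (f : F) : clm2 B e f = B e f := rfl

lemma clm2_isBBM (B : E →ₗ[ℝ] F →ₗ[ℝ] G) :
    IsBoundedBilinearMap ℝ (fun p : E × F => B p.1 p.2) :=
  (clm2 B).isBoundedBilinearMap

end helpers

section mathelpers

variable {P a b c : ℕ}

/-- Matrix multiplication as a bilinear map. -/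
noncomputable def mulB (a b c : ℕ) :
    Matrix (Fin a) (Fin b) ℝ →ₗ[ℝ] Matrix (Fin b) (Fin c) ℝ →ₗ[ℝ] Matrix (Fin a) (Fin c) ℝ :=
  LinearMap.mk₂ ℝ (· * ·) Matrix.add_mul (fun t A B => Matrix.smul_mul t A B)
    Matrix.mul_add (fun t A B => Matrix.mul_smul A t B)

lemma HasFDerivAt.matmul {x : Fin P → ℝ} {f : (Fin P → ℝ) → Matrix (Fin a) (Fin b) ℝ}
    {g : (Fin P → ℝ) → Matrix (Fin b) (Fin c) ℝ}
    {f' : (Fin P → ℝ) →L[ℝ] Matrix (Fin a) (Fin b) ℝ}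
    {g' : (Fin P → ℝ) →L[ℝ] Matrix (Fin b) (Fin c) ℝ}
    (hf : HasFDerivAt f f' x) (hg : HasFDerivAt g g' x) :
    HasFDerivAt (fun y => f y * g y)
      (((clm2 (mulB a b c)).isBoundedBilinearMap.deriv (f x, g x)).comp (f'.prod g')) x :=
  by have := (((clm2 (mulB a b c)).isBoundedBilinearMap.hasFDerivAt (f x, g x)).comp x (hf.prodMk hg) : _); exact this

end mathelpers

section more

variable {P m n : ℕ}

/-- The identity between the pi type and matrices, as a continuous linear equiv
(matrices carrying the `L∞`-operator norm). -/
noncomputable def matCLE (m n : ℕ) : (Fin m → Fin n → ℝ) ≃L[ℝ] Matrix (Fin m) (Fin n) ℝ :=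
  LinearEquiv.toContinuousLinearEquiv
    { toFun := Matrix.of
      invFun := Matrix.of.symm
      map_add' := fun _ _ => rfl
      map_smul' := fun _ _ => rfl
      left_inv := fun _ => rfl
      right_inv := fun _ => rfl }

@[simp] lemma matCLE_apply (f : Fin m → Fin n → ℝ) : matCLE m n f = Matrix.of f := rfl

/-- `mulVec` by a fixed vector, as a continuous linear map in the matrix. -/
noncomputable def mulVecCLM (m n : ℕ) (w : Fin n → ℝ) :
    Matrix (Fin m) (Fin n) ℝ →L[ℝ] (Fin m → ℝ) :=
  LinearMap.toContinuousLinearMap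
    { toFun := fun A => A *ᵥ w
      map_add' := fun A B => Matrix.add_mulVec A B w
      map_smul' := fun t A => by simp [Matrix.smul_mulVec] }

@[simp] lemma mulVecCLM_apply (w : Fin n → ℝ) (A : Matrix (Fin m) (Fin n) ℝ) :
    mulVecCLM m n w A = A *ᵥ w := rfl

/-- The dot product as a bilinear map. -/
noncomputable def dotB (n : ℕ) : (Fin n → ℝ) →ₗ[ℝ] (Fin n → ℝ) →ₗ[ℝ] ℝ :=
  LinearMap.mk₂ ℝ dotProduct add_dotProduct smul_dotProduct
    dotProduct_add dotProduct_smul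

lemma isUnit_FFt {M N : ℕ} (A : Matrix (Fin M) (Fin N) ℝ)
    (hspan : Submodule.span ℝ (Set.range (fun j : Fin N => fun i : Fin M => A i j)) = ⊤) :
    IsUnit (A * Aᵀ) := by
  rw [Matrix.isUnit_iff_isUnit_det, isUnit_iff_ne_zero]
  intro hdet
  obtain ⟨v, hv0, hv⟩ := (Matrix.exists_mulVec_eq_zero_iff).2 hdet
  have h1 : Aᵀ *ᵥ v = 0 := by
    have h2 : v ⬝ᵥ ((A * Aᵀ) *ᵥ v) = 0 := by rw [hv, dotProduct_zero]
    rw [← Matrix.mulVec_mulVec, Matrix.dotProduct_mulVec, ← Matrix.mulVec_transpose] at h2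
    exact dotProduct_self_eq_zero.1 h2
  -- each column is orthogonal to v, hence v ⬝ᵥ v = 0
  apply hv0
  have hall : ∀ u : Fin M → ℝ, v ⬝ᵥ u = 0 := by
    intro u
    have hu : u ∈ Submodule.span ℝ (Set.range (fun j : Fin N => fun i : Fin M => A i j)) := by
      rw [hspan]; trivial
    induction hu using Submodule.span_induction with
    | mem u hu =>
      obtain ⟨j, rfl⟩ := hu
      have := congrFun h1 j
      simpa [Matrix.mulVec, dotProduct, mul_comm] using this
    | zero => simp
    | add u₁ u₂ _ _ h₁ h₂ => rw [dotProduct_add, h₁, h₂, add_zero]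
    | smul t u _ h => rw [dotProduct_smul, h, smul_zero]
  exact dotProduct_self_eq_zero.1 (hall v)

end more

lemma endgame {M N : ℕ} (Fx A : Matrix (Fin M) (Fin N) ℝ) (w : Fin N → ℝ)
    (hGu : IsUnit (Fx * Fxᵀ)) :
    (w - (Fxᵀ * (Fx * Fxᵀ)⁻¹ * Fx) *ᵥ w) ⬝ᵥ
        -((Fxᵀ * (Fx * Fxᵀ)⁻¹ * A +
            (Fxᵀ * -((Fx * Fxᵀ)⁻¹ * (Fx * Aᵀ + A * Fxᵀ) * (Fx * Fxᵀ)⁻¹) + Aᵀ * (Fx * Fxᵀ)⁻¹)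
              * Fx) *ᵥ w) +
      -((Fxᵀ * (Fx * Fxᵀ)⁻¹ * A +
            (Fxᵀ * -((Fx * Fxᵀ)⁻¹ * (Fx * Aᵀ + A * Fxᵀ) * (Fx * Fxᵀ)⁻¹) + Aᵀ * (Fx * Fxᵀ)⁻¹)
              * Fx) *ᵥ w) ⬝ᵥ (w - (Fxᵀ * (Fx * Fxᵀ)⁻¹ * Fx) *ᵥ w) =
    -2 * (w ⬝ᵥ ((Fxᵀ * (Fx * Fxᵀ)⁻¹ * A) *ᵥ ((1 - Fxᵀ * (Fx * Fxᵀ)⁻¹ * Fx) *ᵥ w))) := by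
  set Gi := (Fx * Fxᵀ)⁻¹ with hGidef
  set Dm := Fxᵀ * Gi * A + (Fxᵀ * -(Gi * (Fx * Aᵀ + A * Fxᵀ) * Gi) + Aᵀ * Gi) * Fx with hDm
  set Pi1 := (1 : Matrix (Fin N) (Fin N) ℝ) - Fxᵀ * Gi * Fx with hPi
  have hdet : IsUnit (Fx * Fxᵀ).det := (Matrix.isUnit_iff_isUnit_det _).1 hGu
  have hGG : (Fx * Fxᵀ) * Gi = 1 := Matrix.mul_nonsing_inv _ hdet
  have hGit : Giᵀ = Gi := by
    rw [hGidef, Matrix.transpose_nonsing_inv, Matrix.transpose_mul, Matrix.transpose_transpose]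
  have hFP : Fx * Pi1 = 0 := by
    rw [hPi, Matrix.mul_sub, Matrix.mul_one,
      show Fx * (Fxᵀ * Gi * Fx) = ((Fx * Fxᵀ) * Gi) * Fx by
        simp only [Matrix.mul_assoc],
      hGG, Matrix.one_mul, sub_self]
  have hDP : Dm * Pi1 = (Fxᵀ * Gi * A) * Pi1 := by
    rw [hDm, Matrix.add_mul, Matrix.mul_assoc _ Fx Pi1, hFP, Matrix.mul_zero, add_zero]
  have hDt : Dmᵀ = Dm := by
    rw [hDm]
    simp only [Matrix.transpose_add, Matrix.transpose_mul, Matrix.transpose_neg,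
      Matrix.transpose_transpose, hGit]
    noncomm_ring
    simp only [Matrix.mul_assoc, Matrix.mul_add, Matrix.add_mul, Matrix.neg_mul,
      Matrix.mul_neg, neg_add, smul_add, Matrix.mul_smul, Matrix.smul_mul]
    abel
  have hu' : w - (Fxᵀ * Gi * Fx) *ᵥ w = Pi1 *ᵥ w := by
    rw [hPi, Matrix.sub_mulVec, Matrix.one_mulVec]
  rw [hu']
  have key : (Dm *ᵥ w) ⬝ᵥ (Pi1 *ᵥ w) = w ⬝ᵥ ((Fxᵀ * Gi * A) *ᵥ (Pi1 *ᵥ w)) := by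
    conv_lhs => rw [← hDt, Matrix.mulVec_transpose]
    rw [← Matrix.dotProduct_mulVec, Matrix.mulVec_mulVec, hDP, ← Matrix.mulVec_mulVec]
  rw [dotProduct_neg, neg_dotProduct, dotProduct_comm (Pi1 *ᵥ w), key]
  ring



/-- If `F : Ω → ℝ^{M×N}` is entrywise `C²` on an open `Ω ⊆ ℝ^P` with the
columns of `F(x)` spanning `ℝ^M` for all `x ∈ Ω`, and `w ∈ ℝ^N`, then the error function
`E(x) := ‖Π(x)w‖²` (squared Euclidean norm via the dot product) has first partial
derivatives `∂E/∂x_p(x) = −2⟨w, Π_p(x)Π(x)w⟩` for every `p` and `x ∈ Ω`. -/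
theorem stmt6 {P M N : ℕ} {Ω : Set (Fin P → ℝ)} (hΩ : IsOpen Ω)
    (F : (Fin P → ℝ) → Matrix (Fin M) (Fin N) ℝ)
    (hF : ∀ i j, ContDiffOn ℝ 2 (fun x => F x i j) Ω)
    (hspan : ∀ x ∈ Ω,
      Submodule.span ℝ (Set.range (fun n : Fin N => fun m : Fin M => F x m n)) = ⊤)
    (w : Fin N → ℝ) :
    ∀ x ∈ Ω, ∀ p : Fin P,
      fderiv ℝ (fun y => (projMat F y *ᵥ w) ⬝ᵥ (projMat F y *ᵥ w)) x (Pi.single p 1)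
        = -2 * (w ⬝ᵥ (projMatP F p x *ᵥ (projMat F x *ᵥ w))) := by
  intro x hx p
  have hdiff : ∀ i j, HasFDerivAt (fun y => F y i j) (fderiv ℝ (fun y => F y i j) x) x :=
    fun i j =>
      (((hF i j).contDiffAt (hΩ.mem_nhds hx)).differentiableAt (by norm_num)).hasFDerivAt
  have hFd : HasFDerivAt F
      ((matCLE M N).toContinuousLinearMap.comp (ContinuousLinearMap.pi fun i =>
        ContinuousLinearMap.pi fun j => fderiv ℝ (fun y => F y i j) x)) x := by
    have h1 : HasFDerivAt (fun y => fun i j => F y i j)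
        (ContinuousLinearMap.pi fun i =>
          ContinuousLinearMap.pi fun j => fderiv ℝ (fun y => F y i j) x) x :=
      hasFDerivAt_pi.2 fun i => hasFDerivAt_pi.2 fun j => hdiff i j
    exact ((matCLE M N).toContinuousLinearMap.hasFDerivAt.comp x h1 : _)
  have hFt : HasFDerivAt (fun y => (F y)ᵀ)
      ((LinearMap.toContinuousLinearMap
          ((Matrix.transposeLinearEquiv (Fin M) (Fin N) ℝ ℝ).toLinearMap)).comp
        ((matCLE M N).toContinuousLinearMap.comp (ContinuousLinearMap.pi fun i =>
          ContinuousLinearMap.pi fun j => fderiv ℝ (fun y => F y i j) x))) x :=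
    ((LinearMap.toContinuousLinearMap
      ((Matrix.transposeLinearEquiv (Fin M) (Fin N) ℝ ℝ).toLinearMap)).hasFDerivAt.comp x hFd : _)
  have hG := hFd.matmul hFt
  have hGu : IsUnit (F x * (F x)ᵀ) := isUnit_FFt (F x) (hspan x hx)
  have hinv := hasFDerivAt_ringInverse (𝕜 := ℝ) hGu.unit
  rw [hGu.unit_spec] at hinv
  have hK : HasFDerivAt (𝕜 := ℝ) (fun y => Ring.inverse (F y * (F y)ᵀ)) _ x := HasFDerivAt.comp (g := Ring.inverse) x hinv hG
  have hT1 := hFt.matmul hK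
  have hT2 := hT1.matmul hFd
  have hv := (mulVecCLM N N w).hasFDerivAt.comp x hT2
  have hu := hv.const_sub w
  have hEd : HasFDerivAt (fun y => (w - ((F y)ᵀ * Ring.inverse (F y * (F y)ᵀ) * F y) *ᵥ w)
          ⬝ᵥ (w - ((F y)ᵀ * Ring.inverse (F y * (F y)ᵀ) * F y) *ᵥ w)) _ x :=
    (HasFDerivAt.comp (g := fun q : (Fin N → ℝ) × (Fin N → ℝ) => clm2 (dotB N) q.1 q.2) x
      ((clm2 (dotB N)).isBoundedBilinearMap.hasFDerivAt
      (w - ((F x)ᵀ * Ring.inverse (F x * (F x)ᵀ) * F x) *ᵥ w,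
       w - ((F x)ᵀ * Ring.inverse (F x * (F x)ᵀ) * F x) *ᵥ w)) (hu.prodMk hu) : _)
  have hfun : (fun y => (projMat F y *ᵥ w) ⬝ᵥ (projMat F y *ᵥ w))
      = (fun y => (w - ((F y)ᵀ * Ring.inverse (F y * (F y)ᵀ) * F y) *ᵥ w)
          ⬝ᵥ (w - ((F y)ᵀ * Ring.inverse (F y * (F y)ᵀ) * F y) *ᵥ w)) := by
    funext y
    rw [projMat, Matrix.nonsing_inv_eq_ringInverse, Matrix.sub_mulVec, Matrix.one_mulVec]
  rw [hfun, hEd.fderiv]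
  simp only [ContinuousLinearMap.comp_apply, ContinuousLinearMap.prod_apply,
    ContinuousLinearMap.neg_apply, IsBoundedBilinearMap.deriv_apply, clm2_apply,
    mulVecCLM_apply, matCLE_apply, ContinuousLinearMap.pi_apply,
    LinearMap.coe_toContinuousLinearMap', Matrix.transposeLinearEquiv_apply,
    ContinuousLinearMap.mulLeftRight_apply, LinearMap.mk₂_apply, mulB, dotB]
  have hA : (matCLE M N) ((ContinuousLinearMap.pi fun i =>
      ContinuousLinearMap.pi fun j => fderiv ℝ (fun y => F y i j) x) (Pi.single p 1))
      = matPartialDeriv F p x := rfl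
  simp only [hA, Matrix.transposeLinearEquiv_apply, Matrix.coe_units_inv, hGu.unit_spec,
    ← Matrix.nonsing_inv_eq_ringInverse, projMatP, projMat]
  exact endgame (F x) (matPartialDeriv F p x) w hGu
end

section
/- Let Ω be an open subset of ℝ^P, let F : Ω → ℝ^{M×N} be entrywise C² with the columns of F(x) spanning ℝ^M for every x ∈ Ω, and let w ∈ ℝ^N. Define E(x) := ‖Π(x)w‖² where Π(x) := I − Fᵀ(x)(F(x)Fᵀ(x))⁻¹F(x), Π_p(x) := Fᵀ(x)(F(x)Fᵀ(x))⁻¹ (∂F/∂x_p)(x), and Π_{q,p}(x) := Fᵀ(x)(F(x)Fᵀ(x))⁻¹ (∂²F/∂x_q∂x_p)(x). Then for all p, q = 1,…,P and every x ∈ Ω, the second partial derivative of E is ∂²E/∂x_q∂x_p(x) = 2⟨w, (Π_p(x)Π_q(x) + Π_q(x)Π_p(x))Π(x)w⟩ + 2⟨Π(x)Π_p(x)ᵀw, Π(x)Π_q(x)ᵀw⟩ − 2⟨Π_q(x)Π(x)w, Π_p(x)Π(x)w⟩ − 2⟨w, Π_{q,p}(x)Π(x)w⟩. -/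
open Matrix

/-- `Π_{q,p}(x) := Fᵀ(x)(F(x)Fᵀ(x))⁻¹ (∂²F/∂x_q∂x_p)(x)`. -/
noncomputable def projMatQP {P M N : ℕ} (F : (Fin P → ℝ) → Matrix (Fin M) (Fin N) ℝ)
    (q p : Fin P) (x : Fin P → ℝ) : Matrix (Fin N) (Fin N) ℝ :=
  (F x)ᵀ * (F x * (F x)ᵀ)⁻¹ * matPartialDeriv (matPartialDeriv F p) q x

namespace S7

/-! ### Entrywise calculus toolbox -/

variable {P a b c : ℕ} {z : Fin P → ℝ}

theorem hasFDerivAt_mul_entry {Φ : (Fin P → ℝ) → Matrix (Fin a) (Fin b) ℝ}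
    {Ψ : (Fin P → ℝ) → Matrix (Fin b) (Fin c) ℝ}
    (hΦ : ∀ i j, DifferentiableAt ℝ (fun y => Φ y i j) z)
    (hΨ : ∀ i j, DifferentiableAt ℝ (fun y => Ψ y i j) z) (i : Fin a) (j : Fin c) :
    HasFDerivAt (fun y => (Φ y * Ψ y) i j)
      (∑ k : Fin b, (Φ z i k • fderiv ℝ (fun y => Ψ y k j) z
        + Ψ z k j • fderiv ℝ (fun y => Φ y i k) z)) z := by
  have h : ∀ k ∈ (Finset.univ : Finset (Fin b)), HasFDerivAt (fun y => Φ y i k * Ψ y k j)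
      (Φ z i k • fderiv ℝ (fun y => Ψ y k j) z + Ψ z k j • fderiv ℝ (fun y => Φ y i k) z) z :=
    fun k _ => (hΦ i k).hasFDerivAt.mul (hΨ k j).hasFDerivAt
  have := HasFDerivAt.fun_sum h
  simpa only [Matrix.mul_apply] using this

theorem differentiableAt_mul_entry {Φ : (Fin P → ℝ) → Matrix (Fin a) (Fin b) ℝ}
    {Ψ : (Fin P → ℝ) → Matrix (Fin b) (Fin c) ℝ}
    (hΦ : ∀ i j, DifferentiableAt ℝ (fun y => Φ y i j) z)
    (hΨ : ∀ i j, DifferentiableAt ℝ (fun y => Ψ y i j) z) (i : Fin a) (j : Fin c) :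
    DifferentiableAt ℝ (fun y => (Φ y * Ψ y) i j) z :=
  (hasFDerivAt_mul_entry hΦ hΨ i j).differentiableAt

theorem matPD_mul {Φ : (Fin P → ℝ) → Matrix (Fin a) (Fin b) ℝ}
    {Ψ : (Fin P → ℝ) → Matrix (Fin b) (Fin c) ℝ}
    (hΦ : ∀ i j, DifferentiableAt ℝ (fun y => Φ y i j) z)
    (hΨ : ∀ i j, DifferentiableAt ℝ (fun y => Ψ y i j) z) (p : Fin P) :
    matPartialDeriv (fun y => Φ y * Ψ y) p z
      = matPartialDeriv Φ p z * Ψ z + Φ z * matPartialDeriv Ψ p z := by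
  ext i j
  have h := (hasFDerivAt_mul_entry hΦ hΨ i j).fderiv
  show fderiv ℝ (fun y => (Φ y * Ψ y) i j) z (Pi.single p 1) = _
  rw [h]
  simp only [Matrix.add_apply, Matrix.mul_apply, matPartialDeriv, Matrix.of_apply]
  simp only [ContinuousLinearMap.coe_sum', Finset.sum_apply, ContinuousLinearMap.add_apply,
    ContinuousLinearMap.coe_smul', Pi.smul_apply, smul_eq_mul]
  rw [← Finset.sum_add_distrib]
  refine Finset.sum_congr rfl fun k _ => ?_
  ring

theorem matPD_transpose (Φ : (Fin P → ℝ) → Matrix (Fin a) (Fin b) ℝ) (p : Fin P) :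
    matPartialDeriv (fun y => (Φ y)ᵀ) p z = (matPartialDeriv Φ p z)ᵀ := rfl

theorem hasFDerivAt_one_sub_entry {Φ : (Fin P → ℝ) → Matrix (Fin a) (Fin a) ℝ}
    (hΦ : ∀ i j, DifferentiableAt ℝ (fun y => Φ y i j) z) (i j : Fin a) :
    HasFDerivAt (fun y => (1 - Φ y) i j) (-(fderiv ℝ (fun y => Φ y i j) z)) z := by
  have := ((hΦ i j).hasFDerivAt).const_sub ((1 : Matrix (Fin a) (Fin a) ℝ) i j)
  simpa only [Matrix.sub_apply] using this

theorem differentiableAt_one_sub_entry {Φ : (Fin P → ℝ) → Matrix (Fin a) (Fin a) ℝ}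
    (hΦ : ∀ i j, DifferentiableAt ℝ (fun y => Φ y i j) z) (i j : Fin a) :
    DifferentiableAt ℝ (fun y => (1 - Φ y) i j) z :=
  (hasFDerivAt_one_sub_entry hΦ i j).differentiableAt

theorem matPD_one_sub {Φ : (Fin P → ℝ) → Matrix (Fin a) (Fin a) ℝ}
    (hΦ : ∀ i j, DifferentiableAt ℝ (fun y => Φ y i j) z) (p : Fin P) :
    matPartialDeriv (fun y => 1 - Φ y) p z = -(matPartialDeriv Φ p z) := by
  ext i j
  show fderiv ℝ (fun y => (1 - Φ y) i j) z (Pi.single p 1) = _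
  rw [(hasFDerivAt_one_sub_entry hΦ i j).fderiv]
  simp [matPartialDeriv]

theorem hasFDerivAt_dotmul {M : (Fin P → ℝ) → Matrix (Fin a) (Fin b) ℝ}
    (v : Fin a → ℝ) (w : Fin b → ℝ)
    (h : ∀ i j, DifferentiableAt ℝ (fun y => M y i j) z) :
    HasFDerivAt (fun y => v ⬝ᵥ (M y *ᵥ w))
      (∑ i : Fin a, ∑ j : Fin b, (v i * w j) • fderiv ℝ (fun y => M y i j) z) z := by
  have h1 : ∀ i ∈ (Finset.univ : Finset (Fin a)), HasFDerivAt
      (fun y => ∑ j : Fin b, (v i * w j) * M y i j)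
      (∑ j : Fin b, (v i * w j) • fderiv ℝ (fun y => M y i j) z) z := by
    intro i _
    exact HasFDerivAt.fun_sum fun j _ => (h i j).hasFDerivAt.const_mul (v i * w j)
  have h2 := HasFDerivAt.fun_sum h1
  have h3 : (fun y => ∑ i : Fin a, ∑ j : Fin b, (v i * w j) * M y i j)
      = fun y => v ⬝ᵥ (M y *ᵥ w) := by
    funext y
    simp only [dotProduct, Matrix.mulVec, Finset.mul_sum]
    exact Finset.sum_congr rfl fun i _ => Finset.sum_congr rfl fun j _ => by ring
  rw [h3] at h2
  exact h2

theorem differentiableAt_dotmul {M : (Fin P → ℝ) → Matrix (Fin a) (Fin b) ℝ}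
    (v : Fin a → ℝ) (w : Fin b → ℝ)
    (h : ∀ i j, DifferentiableAt ℝ (fun y => M y i j) z) :
    DifferentiableAt ℝ (fun y => v ⬝ᵥ (M y *ᵥ w)) z :=
  (hasFDerivAt_dotmul v w h).differentiableAt

theorem fderiv_dotmul {M : (Fin P → ℝ) → Matrix (Fin a) (Fin b) ℝ}
    (v : Fin a → ℝ) (w : Fin b → ℝ)
    (h : ∀ i j, DifferentiableAt ℝ (fun y => M y i j) z) (q : Fin P) :
    fderiv ℝ (fun y => v ⬝ᵥ (M y *ᵥ w)) z (Pi.single q 1)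
      = v ⬝ᵥ (matPartialDeriv M q z *ᵥ w) := by
  rw [(hasFDerivAt_dotmul v w h).fderiv]
  simp only [ContinuousLinearMap.coe_sum', Finset.sum_apply, ContinuousLinearMap.coe_smul',
    Pi.smul_apply, smul_eq_mul, dotProduct, Matrix.mulVec, matPartialDeriv, Matrix.of_apply]
  refine Finset.sum_congr rfl fun i _ => ?_
  rw [Finset.mul_sum]
  exact Finset.sum_congr rfl fun j _ => by ring

theorem dotmul_trans {a b : ℕ} (v : Fin a → ℝ) (w : Fin b → ℝ) (M : Matrix (Fin a) (Fin b) ℝ) :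
    v ⬝ᵥ (M *ᵥ w) = w ⬝ᵥ (Mᵀ *ᵥ v) := by
  simp only [dotProduct, Matrix.mulVec, Matrix.transpose_apply, Finset.mul_sum]
  rw [Finset.sum_comm]
  exact Finset.sum_congr rfl fun i _ => Finset.sum_congr rfl fun j _ => by ring

theorem dd {a b c : ℕ} (M : Matrix (Fin a) (Fin b) ℝ) (N : Matrix (Fin a) (Fin c) ℝ)
    (u : Fin b → ℝ) (v : Fin c → ℝ) :
    (M *ᵥ u) ⬝ᵥ (N *ᵥ v) = u ⬝ᵥ ((Mᵀ * N) *ᵥ v) := by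
  rw [← Matrix.mulVec_mulVec, dotmul_trans u (N *ᵥ v) Mᵀ, Matrix.transpose_transpose]
  exact dotProduct_comm _ _

/-! ### Matrix inverse differentiation -/

section Inv

attribute [local instance] Matrix.linftyOpNormedAddCommGroup Matrix.linftyOpNormedSpace
  Matrix.linftyOpNormedRing Matrix.linftyOpNormedAlgebra

variable {n : ℕ} {Φ : (Fin P → ℝ) → Matrix (Fin n) (Fin n) ℝ}

/-- entry evaluation as a continuous linear map -/
noncomputable def entryCLM (i j : Fin n) : Matrix (Fin n) (Fin n) ℝ →L[ℝ] ℝ :=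
  LinearMap.toContinuousLinearMap
    { toFun := fun A => A i j, map_add' := fun _ _ => rfl, map_smul' := fun _ _ => rfl }

@[simp] theorem entryCLM_apply (i j : Fin n) (A : Matrix (Fin n) (Fin n) ℝ) :
    entryCLM i j A = A i j := rfl

theorem key_inv (hΦ : ∀ i j, DifferentiableAt ℝ (fun y => Φ y i j) z) (hu : IsUnit (Φ z)) :
    (∀ i j, DifferentiableAt ℝ (fun y => (Φ y)⁻¹ i j) z) ∧
    (∀ p, matPartialDeriv (fun y => (Φ y)⁻¹) p z
        = -((Φ z)⁻¹ * matPartialDeriv Φ p z * (Φ z)⁻¹)) := by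
  classical
  set L0 : (Fin P → ℝ) →L[ℝ] (Fin n → Fin n → ℝ) :=
    ContinuousLinearMap.pi (fun i => ContinuousLinearMap.pi
      (fun j => fderiv ℝ (fun y => Φ y i j) z)) with hL0
  have h0 : HasFDerivAt (fun y (i : Fin n) (j : Fin n) => Φ y i j) L0 z :=
    hasFDerivAt_pi.2 fun i => hasFDerivAt_pi.2 fun j => (hΦ i j).hasFDerivAt
  set eC : (Fin n → Fin n → ℝ) ≃L[ℝ] Matrix (Fin n) (Fin n) ℝ :=
    (Matrix.ofLinearEquiv ℝ).toContinuousLinearEquiv with heC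
  have hm : HasFDerivAt Φ
      ((eC : (Fin n → Fin n → ℝ) →L[ℝ] Matrix (Fin n) (Fin n) ℝ).comp L0) z := by
    have := ((eC : (Fin n → Fin n → ℝ) →L[ℝ] Matrix (Fin n) (Fin n) ℝ).hasFDerivAt).comp z h0
    exact this
  have hinv0 : HasFDerivAt (Ring.inverse : Matrix (Fin n) (Fin n) ℝ → _)
      (-(ContinuousLinearMap.mulLeftRight ℝ _ (↑hu.unit⁻¹) (↑hu.unit⁻¹))) (Φ z) := by
    have := hasFDerivAt_ringInverse (𝕜 := ℝ) hu.unit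
    rwa [hu.unit_spec] at this
  have hcomp : HasFDerivAt (fun y => (Φ y)⁻¹)
      ((-(ContinuousLinearMap.mulLeftRight ℝ _ (↑hu.unit⁻¹) (↑hu.unit⁻¹))).comp
        ((eC : (Fin n → Fin n → ℝ) →L[ℝ] Matrix (Fin n) (Fin n) ℝ).comp L0)) z := by
    have := hinv0.comp z hm
    simpa only [Function.comp_def, ← Matrix.nonsing_inv_eq_ringInverse] using this
  have hentry : ∀ i j, HasFDerivAt (fun y => (Φ y)⁻¹ i j)
      ((entryCLM i j).comp
        ((-(ContinuousLinearMap.mulLeftRight ℝ _ (↑hu.unit⁻¹) (↑hu.unit⁻¹))).comp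
          ((eC : (Fin n → Fin n → ℝ) →L[ℝ] Matrix (Fin n) (Fin n) ℝ).comp L0))) z :=
    fun i j => ((entryCLM i j).hasFDerivAt).comp z hcomp
  have huinv : ((↑hu.unit⁻¹ : Matrix (Fin n) (Fin n) ℝ)) = (Φ z)⁻¹ := by
    rw [← Ring.inverse_unit hu.unit, hu.unit_spec, Matrix.nonsing_inv_eq_ringInverse]
  constructor
  · exact fun i j => (hentry i j).differentiableAt
  · intro p
    ext i j
    show fderiv ℝ (fun y => (Φ y)⁻¹ i j) z (Pi.single p 1) = _
    rw [(hentry i j).fderiv]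
    simp only [ContinuousLinearMap.coe_comp', Function.comp_apply, ContinuousLinearMap.neg_apply,
      ContinuousLinearMap.mulLeftRight_apply, entryCLM_apply, huinv]
    have : ((eC : (Fin n → Fin n → ℝ) →L[ℝ] Matrix (Fin n) (Fin n) ℝ) (L0 (Pi.single p 1)))
        = matPartialDeriv Φ p z := rfl
    change (-((Φ z)⁻¹ * ((eC : (Fin n → Fin n → ℝ) →L[ℝ] Matrix (Fin n) (Fin n) ℝ)
      (L0 (Pi.single p 1))) * (Φ z)⁻¹)) i j = _
    rw [this]

end Inv

/-! ### Unit frame operator -/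

theorem isUnit_AAt {M N : ℕ} (A : Matrix (Fin M) (Fin N) ℝ)
    (hspan : Submodule.span ℝ (Set.range (fun n : Fin N => fun m : Fin M => A m n)) = ⊤) :
    IsUnit (A * Aᵀ) := by
  rw [Matrix.isUnit_iff_isUnit_det, isUnit_iff_ne_zero]
  intro hdet
  obtain ⟨v, hv0, hv⟩ := Matrix.exists_mulVec_eq_zero_iff.2 hdet
  have h1 : Aᵀ *ᵥ v = 0 := by
    have h2 : (Aᵀ *ᵥ v) ⬝ᵥ (Aᵀ *ᵥ v) = 0 := by
      have := congrArg (fun u => v ⬝ᵥ u) hv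
      simpa [← Matrix.mulVec_mulVec, dotmul_trans v (Aᵀ *ᵥ v) A] using this
    exact dotProduct_self_eq_zero.1 h2
  apply hv0
  have hall : ∀ u ∈ Submodule.span ℝ
      (Set.range (fun n : Fin N => fun m : Fin M => A m n)), u ⬝ᵥ v = 0 := by
    intro u hu
    induction hu using Submodule.span_induction with
    | mem u hu =>
      obtain ⟨n, rfl⟩ := hu
      have := congrFun h1 n
      simpa [Matrix.mulVec, dotProduct, mul_comm] using this
    | zero => simp
    | add u₁ u₂ _ _ h₁ h₂ => simp [add_dotProduct, h₁, h₂]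
    | smul a u _ h => rw [smul_dotProduct, h]; simp
  exact dotProduct_self_eq_zero.1 (hall v (by rw [hspan]; trivial))

/-! ### Matrix algebra identities -/

section Alg
variable {M N : ℕ}

theorem hGH (A : Matrix (Fin M) (Fin N) ℝ) (hu : IsUnit (A * Aᵀ)) : (A * Aᵀ) * (A * Aᵀ)⁻¹ = 1 :=
  Matrix.mul_nonsing_inv _ ((Matrix.isUnit_iff_isUnit_det _).1 hu)

theorem hHG (A : Matrix (Fin M) (Fin N) ℝ) (hu : IsUnit (A * Aᵀ)) : (A * Aᵀ)⁻¹ * (A * Aᵀ) = 1 :=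
  Matrix.nonsing_inv_mul _ ((Matrix.isUnit_iff_isUnit_det _).1 hu)

theorem hHt (A : Matrix (Fin M) (Fin N) ℝ) : ((A * Aᵀ)⁻¹)ᵀ = (A * Aᵀ)⁻¹ := by
  rw [Matrix.transpose_nonsing_inv, Matrix.transpose_mul, Matrix.transpose_transpose]

theorem e1 {k : ℕ} (A : Matrix (Fin M) (Fin N) ℝ) (hu : IsUnit (A * Aᵀ))
    (X : Matrix (Fin M) (Fin k) ℝ) : A * (Aᵀ * ((A * Aᵀ)⁻¹ * X)) = X := by
  calc A * (Aᵀ * ((A * Aᵀ)⁻¹ * X)) = (A * Aᵀ) * (A * Aᵀ)⁻¹ * X := by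
        simp only [Matrix.mul_assoc]
    _ = X := by rw [hGH A hu, Matrix.one_mul]

theorem e2 {k : ℕ} (A : Matrix (Fin M) (Fin N) ℝ) (hu : IsUnit (A * Aᵀ))
    (X : Matrix (Fin M) (Fin k) ℝ) : (A * Aᵀ)⁻¹ * (A * (Aᵀ * X)) = X := by
  calc (A * Aᵀ)⁻¹ * (A * (Aᵀ * X)) = (A * Aᵀ)⁻¹ * (A * Aᵀ) * X := by
        simp only [Matrix.mul_assoc]
    _ = X := by rw [hHG A hu, Matrix.one_mul]

theorem e3 (A : Matrix (Fin M) (Fin N) ℝ) (hu : IsUnit (A * Aᵀ)) :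
    A * (Aᵀ * (A * Aᵀ)⁻¹) = 1 := by
  rw [← Matrix.mul_assoc]; exact hGH A hu

theorem algDPi (A D : Matrix (Fin M) (Fin N) ℝ) (hu : IsUnit (A * Aᵀ)) :
    -((Dᵀ * (A * Aᵀ)⁻¹ + Aᵀ * -((A * Aᵀ)⁻¹ * (D * Aᵀ + A * Dᵀ) * (A * Aᵀ)⁻¹)) * A
        + Aᵀ * (A * Aᵀ)⁻¹ * D)
      = -((Aᵀ * (A * Aᵀ)⁻¹ * D) * (1 - Aᵀ * (A * Aᵀ)⁻¹ * A)
        + (1 - Aᵀ * (A * Aᵀ)⁻¹ * A) * (Aᵀ * (A * Aᵀ)⁻¹ * D)ᵀ) := by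
  simp only [Matrix.transpose_mul, Matrix.transpose_transpose, hHt, Matrix.mul_sub,
    Matrix.sub_mul, Matrix.mul_add, Matrix.add_mul, Matrix.mul_one, Matrix.one_mul,
    Matrix.neg_mul, Matrix.mul_neg, Matrix.mul_assoc, e1 A hu, e2 A hu, e3 A hu, hHG A hu]
  noncomm_ring

theorem algDS (A D : Matrix (Fin M) (Fin N) ℝ) (hu : IsUnit (A * Aᵀ)) (w : Fin N → ℝ)
    (H Pi Pp : Matrix _ _ ℝ)
    (hH : H = (A * Aᵀ)⁻¹) (hPi : Pi = 1 - Aᵀ * H * A) (hPp : Pp = Aᵀ * H * D) :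
    w ⬝ᵥ (((-(Pp * Pi + Pi * Ppᵀ))ᵀ * Pi + Piᵀ * -(Pp * Pi + Pi * Ppᵀ)) *ᵥ w)
      = -2 * (w ⬝ᵥ ((Pp * Pi) *ᵥ w)) := by
  have hmat : (-(Pp * Pi + Pi * Ppᵀ))ᵀ * Pi + Piᵀ * -(Pp * Pi + Pi * Ppᵀ)
      = -(Pp * Pi) + -((Pp * Pi)ᵀ) := by
    subst hH hPi hPp
    simp only [Matrix.transpose_mul, Matrix.transpose_transpose, Matrix.transpose_sub,
      Matrix.transpose_one, Matrix.transpose_add, Matrix.transpose_neg, hHt, Matrix.mul_sub,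
      Matrix.sub_mul, Matrix.mul_add, Matrix.add_mul, Matrix.mul_one, Matrix.one_mul,
      Matrix.neg_mul, Matrix.mul_neg, Matrix.mul_assoc, e1 A hu, e2 A hu, e3 A hu, hHG A hu,
      hGH A hu]
    noncomm_ring
  rw [hmat, Matrix.add_mulVec, Matrix.neg_mulVec, Matrix.neg_mulVec, dotProduct_add,
    dotProduct_neg, dotProduct_neg, ← dotmul_trans w w (Pp * Pi)]
  ring

set_option maxHeartbeats 1000000 in
theorem algFinalMat (A Dp Dq Dqp : Matrix (Fin M) (Fin N) ℝ) (hu : IsUnit (A * Aᵀ))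
    (H Pi Pp Pq Pqp : Matrix _ _ ℝ)
    (hH : H = (A * Aᵀ)⁻¹) (hPi : Pi = 1 - Aᵀ * H * A) (hPp : Pp = Aᵀ * H * Dp)
    (hPq : Pq = Aᵀ * H * Dq) (hPqp : Pqp = Aᵀ * H * Dqp) :
    -(((Dqᵀ * H + Aᵀ * -(H * (Dq * Aᵀ + A * Dqᵀ) * H)) * Dp + Aᵀ * H * Dqp) * Pi
        + Aᵀ * H * Dp * -(Pq * Pi + Pi * Pqᵀ))
      = (Pp * Pq + Pq * Pp) * Pi + (Pi * Ppᵀ)ᵀ * (Pi * Pqᵀ)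
        - (Pq * Pi)ᵀ * (Pp * Pi) - Pqp * Pi := by
  subst hH hPi hPp hPq hPqp
  simp only [Matrix.transpose_mul, Matrix.transpose_transpose, Matrix.transpose_sub,
    Matrix.transpose_one, hHt, Matrix.mul_sub, Matrix.sub_mul, Matrix.mul_add, Matrix.add_mul,
    Matrix.mul_one, Matrix.one_mul, Matrix.neg_mul, Matrix.mul_neg, Matrix.mul_assoc,
    e1 A hu, e2 A hu, e3 A hu, hHG A hu, hGH A hu]
  noncomm_ring

set_option maxHeartbeats 1000000 in
theorem algFinal (A Dp Dq Dqp : Matrix (Fin M) (Fin N) ℝ) (hu : IsUnit (A * Aᵀ)) (w : Fin N → ℝ)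
    (H Pi Pp Pq Pqp : Matrix _ _ ℝ)
    (hH : H = (A * Aᵀ)⁻¹) (hPi : Pi = 1 - Aᵀ * H * A) (hPp : Pp = Aᵀ * H * Dp)
    (hPq : Pq = Aᵀ * H * Dq) (hPqp : Pqp = Aᵀ * H * Dqp) :
    -2 * (w ⬝ᵥ ((((Dqᵀ * H + Aᵀ * -(H * (Dq * Aᵀ + A * Dqᵀ) * H)) * Dp + Aᵀ * H * Dqp) * Pi
        + Aᵀ * H * Dp * -(Pq * Pi + Pi * Pqᵀ)) *ᵥ w))
      = 2 * (w ⬝ᵥ ((Pp * Pq + Pq * Pp) *ᵥ (Pi *ᵥ w)))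
        + 2 * ((Pi *ᵥ (Ppᵀ *ᵥ w)) ⬝ᵥ (Pi *ᵥ (Pqᵀ *ᵥ w)))
        - 2 * ((Pq *ᵥ (Pi *ᵥ w)) ⬝ᵥ (Pp *ᵥ (Pi *ᵥ w)))
        - 2 * (w ⬝ᵥ (Pqp *ᵥ (Pi *ᵥ w))) := by
  have hmat := algFinalMat A Dp Dq Dqp hu H Pi Pp Pq Pqp hH hPi hPp hPq hPqp
  have hE : (((Dqᵀ * H + Aᵀ * -(H * (Dq * Aᵀ + A * Dqᵀ) * H)) * Dp + Aᵀ * H * Dqp) * Pi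
        + Aᵀ * H * Dp * -(Pq * Pi + Pi * Pqᵀ))
      = -((Pp * Pq + Pq * Pp) * Pi + (Pi * Ppᵀ)ᵀ * (Pi * Pqᵀ)
        - (Pq * Pi)ᵀ * (Pp * Pi) - Pqp * Pi) := by
    rw [← hmat, neg_neg]
  rw [hE, Matrix.mulVec_mulVec, Matrix.mulVec_mulVec, Matrix.mulVec_mulVec,
    Matrix.mulVec_mulVec, Matrix.mulVec_mulVec,
    dd (Pi * Ppᵀ) (Pi * Pqᵀ) w w, dd (Pq * Pi) (Pp * Pi) w w]
  rw [Matrix.neg_mulVec, dotProduct_neg]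
  rw [show ((Pp * Pq + Pq * Pp) * Pi + (Pi * Ppᵀ)ᵀ * (Pi * Pqᵀ)
        - (Pq * Pi)ᵀ * (Pp * Pi) - Pqp * Pi)
      = ((Pp * Pq + Pq * Pp) * Pi) + ((Pi * Ppᵀ)ᵀ * (Pi * Pqᵀ))
        + (-((Pq * Pi)ᵀ * (Pp * Pi))) + (-(Pqp * Pi)) from by noncomm_ring]
  rw [Matrix.add_mulVec, Matrix.add_mulVec, Matrix.add_mulVec, Matrix.neg_mulVec,
    Matrix.neg_mulVec, dotProduct_add, dotProduct_add, dotProduct_add,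
    dotProduct_neg, dotProduct_neg]
  simp only [Matrix.mulVec_mulVec]
  ring

end Alg

end S7
namespace S7
section Main

variable {P M N : ℕ} {Ω : Set (Fin P → ℝ)} {F : (Fin P → ℝ) → Matrix (Fin M) (Fin N) ℝ}
  {z : Fin P → ℝ}

theorem diffA (hΩ : IsOpen Ω) (hF : ∀ i j, ContDiffOn ℝ 2 (fun x => F x i j) Ω) (hz : z ∈ Ω) :
    ∀ i j, DifferentiableAt ℝ (fun y => F y i j) z := fun i j =>
  (((hF i j).differentiableOn (by norm_num)) z hz).differentiableAt (hΩ.mem_nhds hz)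

theorem diffAt' (hΩ : IsOpen Ω) (hF : ∀ i j, ContDiffOn ℝ 2 (fun x => F x i j) Ω) (hz : z ∈ Ω) :
    ∀ i j, DifferentiableAt ℝ (fun y => (F y)ᵀ i j) z := fun i j => diffA hΩ hF hz j i

theorem diffDA (hΩ : IsOpen Ω) (hF : ∀ i j, ContDiffOn ℝ 2 (fun x => F x i j) Ω) (hz : z ∈ Ω)
    (p : Fin P) : ∀ i j, DifferentiableAt ℝ (fun y => matPartialDeriv F p y i j) z := by
  intro i j
  have h1 : ContDiffOn ℝ 1 (fderiv ℝ (fun x => F x i j)) Ω :=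
    (hF i j).fderiv_of_isOpen hΩ (by norm_num)
  have h2 : DifferentiableAt ℝ (fderiv ℝ (fun x => F x i j)) z :=
    ((h1.differentiableOn (by norm_num)) z hz).differentiableAt (hΩ.mem_nhds hz)
  exact h2.clm_apply (differentiableAt_const _)

theorem diffG (hΩ : IsOpen Ω) (hF : ∀ i j, ContDiffOn ℝ 2 (fun x => F x i j) Ω) (hz : z ∈ Ω) :
    ∀ i j, DifferentiableAt ℝ (fun y => (F y * (F y)ᵀ) i j) z :=
  differentiableAt_mul_entry (diffA hΩ hF hz) (diffAt' hΩ hF hz)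

theorem huG
    (hspan : ∀ x ∈ Ω, Submodule.span ℝ
      (Set.range (fun n : Fin N => fun m : Fin M => F x m n)) = ⊤) (hz : z ∈ Ω) :
    IsUnit (F z * (F z)ᵀ) := isUnit_AAt _ (hspan z hz)

theorem diffH (hΩ : IsOpen Ω) (hF : ∀ i j, ContDiffOn ℝ 2 (fun x => F x i j) Ω)
    (hspan : ∀ x ∈ Ω, Submodule.span ℝ
      (Set.range (fun n : Fin N => fun m : Fin M => F x m n)) = ⊤) (hz : z ∈ Ω) :
    ∀ i j, DifferentiableAt ℝ (fun y => (F y * (F y)ᵀ)⁻¹ i j) z :=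
  (key_inv (diffG hΩ hF hz) (huG hspan hz)).1

theorem pdG (hΩ : IsOpen Ω) (hF : ∀ i j, ContDiffOn ℝ 2 (fun x => F x i j) Ω) (hz : z ∈ Ω)
    (p : Fin P) : matPartialDeriv (fun y => F y * (F y)ᵀ) p z
      = matPartialDeriv F p z * (F z)ᵀ + F z * (matPartialDeriv F p z)ᵀ := by
  rw [matPD_mul (diffA hΩ hF hz) (diffAt' hΩ hF hz) p, matPD_transpose]

theorem pdH (hΩ : IsOpen Ω) (hF : ∀ i j, ContDiffOn ℝ 2 (fun x => F x i j) Ω)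
    (hspan : ∀ x ∈ Ω, Submodule.span ℝ
      (Set.range (fun n : Fin N => fun m : Fin M => F x m n)) = ⊤) (hz : z ∈ Ω) (p : Fin P) :
    matPartialDeriv (fun y => (F y * (F y)ᵀ)⁻¹) p z
      = -((F z * (F z)ᵀ)⁻¹ * (matPartialDeriv F p z * (F z)ᵀ + F z * (matPartialDeriv F p z)ᵀ)
          * (F z * (F z)ᵀ)⁻¹) := by
  rw [(key_inv (diffG hΩ hF hz) (huG hspan hz)).2 p, pdG hΩ hF hz p]

theorem diffFtH (hΩ : IsOpen Ω) (hF : ∀ i j, ContDiffOn ℝ 2 (fun x => F x i j) Ω)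
    (hspan : ∀ x ∈ Ω, Submodule.span ℝ
      (Set.range (fun n : Fin N => fun m : Fin M => F x m n)) = ⊤) (hz : z ∈ Ω) :
    ∀ i j, DifferentiableAt ℝ (fun y => ((F y)ᵀ * (F y * (F y)ᵀ)⁻¹) i j) z :=
  differentiableAt_mul_entry (diffAt' hΩ hF hz) (diffH hΩ hF hspan hz)

theorem pdFtH (hΩ : IsOpen Ω) (hF : ∀ i j, ContDiffOn ℝ 2 (fun x => F x i j) Ω)
    (hspan : ∀ x ∈ Ω, Submodule.span ℝ
      (Set.range (fun n : Fin N => fun m : Fin M => F x m n)) = ⊤) (hz : z ∈ Ω) (p : Fin P) :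
    matPartialDeriv (fun y => (F y)ᵀ * (F y * (F y)ᵀ)⁻¹) p z
      = (matPartialDeriv F p z)ᵀ * (F z * (F z)ᵀ)⁻¹
        + (F z)ᵀ * -((F z * (F z)ᵀ)⁻¹
            * (matPartialDeriv F p z * (F z)ᵀ + F z * (matPartialDeriv F p z)ᵀ)
            * (F z * (F z)ᵀ)⁻¹) := by
  rw [matPD_mul (diffAt' hΩ hF hz) (diffH hΩ hF hspan hz) p, matPD_transpose,
    pdH hΩ hF hspan hz p]

theorem diffB (hΩ : IsOpen Ω) (hF : ∀ i j, ContDiffOn ℝ 2 (fun x => F x i j) Ω)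
    (hspan : ∀ x ∈ Ω, Submodule.span ℝ
      (Set.range (fun n : Fin N => fun m : Fin M => F x m n)) = ⊤) (hz : z ∈ Ω) :
    ∀ i j, DifferentiableAt ℝ (fun y => ((F y)ᵀ * (F y * (F y)ᵀ)⁻¹ * F y) i j) z :=
  differentiableAt_mul_entry (diffFtH hΩ hF hspan hz) (diffA hΩ hF hz)

theorem diffPi (hΩ : IsOpen Ω) (hF : ∀ i j, ContDiffOn ℝ 2 (fun x => F x i j) Ω)
    (hspan : ∀ x ∈ Ω, Submodule.span ℝ
      (Set.range (fun n : Fin N => fun m : Fin M => F x m n)) = ⊤) (hz : z ∈ Ω) :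
    ∀ i j, DifferentiableAt ℝ (fun y => projMat F y i j) z := fun i j =>
  differentiableAt_one_sub_entry (diffB hΩ hF hspan hz) i j

theorem pdPi (hΩ : IsOpen Ω) (hF : ∀ i j, ContDiffOn ℝ 2 (fun x => F x i j) Ω)
    (hspan : ∀ x ∈ Ω, Submodule.span ℝ
      (Set.range (fun n : Fin N => fun m : Fin M => F x m n)) = ⊤) (hz : z ∈ Ω) (p : Fin P) :
    matPartialDeriv (projMat F) p z
      = -(projMatP F p z * projMat F z + projMat F z * (projMatP F p z)ᵀ) := by
  have h0 : matPartialDeriv (projMat F) p z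
      = matPartialDeriv (fun y => 1 - (F y)ᵀ * (F y * (F y)ᵀ)⁻¹ * F y) p z := rfl
  rw [h0, matPD_one_sub (diffB hΩ hF hspan hz) p,
    matPD_mul (diffFtH hΩ hF hspan hz) (diffA hΩ hF hz) p, pdFtH hΩ hF hspan hz p]
  show _ = -((F z)ᵀ * (F z * (F z)ᵀ)⁻¹ * matPartialDeriv F p z
      * (1 - (F z)ᵀ * (F z * (F z)ᵀ)⁻¹ * F z)
    + (1 - (F z)ᵀ * (F z * (F z)ᵀ)⁻¹ * F z)
      * ((F z)ᵀ * (F z * (F z)ᵀ)⁻¹ * matPartialDeriv F p z)ᵀ)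
  exact algDPi (F z) (matPartialDeriv F p z) (huG hspan hz)

theorem diffPp (hΩ : IsOpen Ω) (hF : ∀ i j, ContDiffOn ℝ 2 (fun x => F x i j) Ω)
    (hspan : ∀ x ∈ Ω, Submodule.span ℝ
      (Set.range (fun n : Fin N => fun m : Fin M => F x m n)) = ⊤) (hz : z ∈ Ω) (p : Fin P) :
    ∀ i j, DifferentiableAt ℝ (fun y => projMatP F p y i j) z :=
  differentiableAt_mul_entry (diffFtH hΩ hF hspan hz) (diffDA hΩ hF hz p)

theorem pdPp (hΩ : IsOpen Ω) (hF : ∀ i j, ContDiffOn ℝ 2 (fun x => F x i j) Ω)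
    (hspan : ∀ x ∈ Ω, Submodule.span ℝ
      (Set.range (fun n : Fin N => fun m : Fin M => F x m n)) = ⊤) (hz : z ∈ Ω) (p q : Fin P) :
    matPartialDeriv (fun y => projMatP F p y) q z
      = ((matPartialDeriv F q z)ᵀ * (F z * (F z)ᵀ)⁻¹
          + (F z)ᵀ * -((F z * (F z)ᵀ)⁻¹
              * (matPartialDeriv F q z * (F z)ᵀ + F z * (matPartialDeriv F q z)ᵀ)
              * (F z * (F z)ᵀ)⁻¹)) * matPartialDeriv F p z
        + (F z)ᵀ * (F z * (F z)ᵀ)⁻¹ * matPartialDeriv (matPartialDeriv F p) q z := by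
  have h0 : matPartialDeriv (fun y => projMatP F p y) q z
      = matPartialDeriv (fun y => ((F y)ᵀ * (F y * (F y)ᵀ)⁻¹) * matPartialDeriv F p y) q z := rfl
  rw [h0, matPD_mul (diffFtH hΩ hF hspan hz) (diffDA hΩ hF hz p) q, pdFtH hΩ hF hspan hz q]

theorem stepA (hΩ : IsOpen Ω) (hF : ∀ i j, ContDiffOn ℝ 2 (fun x => F x i j) Ω)
    (hspan : ∀ x ∈ Ω, Submodule.span ℝ
      (Set.range (fun n : Fin N => fun m : Fin M => F x m n)) = ⊤) (hz : z ∈ Ω)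
    (w : Fin N → ℝ) (p : Fin P) :
    fderiv ℝ (fun y => (projMat F y *ᵥ w) ⬝ᵥ (projMat F y *ᵥ w)) z (Pi.single p 1)
      = -2 * (w ⬝ᵥ ((projMatP F p z * projMat F z) *ᵥ w)) := by
  have hdT : ∀ i j, DifferentiableAt ℝ (fun y => (projMat F y)ᵀ i j) z := fun i j =>
    diffPi hΩ hF hspan hz j i
  have hdS : ∀ i j, DifferentiableAt ℝ (fun y => ((projMat F y)ᵀ * projMat F y) i j) z :=
    differentiableAt_mul_entry hdT (diffPi hΩ hF hspan hz)
  have hfun : (fun y => (projMat F y *ᵥ w) ⬝ᵥ (projMat F y *ᵥ w))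
      = fun y => w ⬝ᵥ (((projMat F y)ᵀ * projMat F y) *ᵥ w) := funext fun y => dd _ _ w w
  rw [hfun, fderiv_dotmul w w hdS p, matPD_mul hdT (diffPi hΩ hF hspan hz) p,
    matPD_transpose, pdPi hΩ hF hspan hz p]
  exact algDS (F z) (matPartialDeriv F p z) (huG hspan hz) w _ _ _ rfl rfl rfl

end Main
end S7

/-- If `F : Ω → ℝ^{M×N}` is entrywise `C²` on an open `Ω ⊆ ℝ^P` with the
columns of `F(x)` spanning `ℝ^M` for all `x ∈ Ω`, and `w ∈ ℝ^N`, then the error function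
`E(x) := ‖Π(x)w‖²` (squared Euclidean norm via the dot product) has second partial
derivatives
`∂²E/∂x_q∂x_p(x) = 2⟨w, (Π_pΠ_q + Π_qΠ_p)Πw⟩ + 2⟨ΠΠ_pᵀw, ΠΠ_qᵀw⟩ − 2⟨Π_qΠw, Π_pΠw⟩
  − 2⟨w, Π_{q,p}Πw⟩` for all `p, q` and `x ∈ Ω`. -/
theorem stmt7 {P M N : ℕ} {Ω : Set (Fin P → ℝ)} (hΩ : IsOpen Ω)
    (F : (Fin P → ℝ) → Matrix (Fin M) (Fin N) ℝ)
    (hF : ∀ i j, ContDiffOn ℝ 2 (fun x => F x i j) Ω)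
    (hspan : ∀ x ∈ Ω,
      Submodule.span ℝ (Set.range (fun n : Fin N => fun m : Fin M => F x m n)) = ⊤)
    (w : Fin N → ℝ) :
    ∀ x ∈ Ω, ∀ p q : Fin P,
      fderiv ℝ
        (fun z => fderiv ℝ (fun y => (projMat F y *ᵥ w) ⬝ᵥ (projMat F y *ᵥ w)) z (Pi.single p 1))
        x (Pi.single q 1)
      = 2 * (w ⬝ᵥ ((projMatP F p x * projMatP F q x + projMatP F q x * projMatP F p x)
            *ᵥ (projMat F x *ᵥ w)))
        + 2 * ((projMat F x *ᵥ ((projMatP F p x)ᵀ *ᵥ w)) ⬝ᵥ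
               (projMat F x *ᵥ ((projMatP F q x)ᵀ *ᵥ w)))
        - 2 * ((projMatP F q x *ᵥ (projMat F x *ᵥ w)) ⬝ᵥ
               (projMatP F p x *ᵥ (projMat F x *ᵥ w)))
        - 2 * (w ⬝ᵥ (projMatQP F q p x *ᵥ (projMat F x *ᵥ w))) := by
  intro x hx p q
  have hev : (fun z => fderiv ℝ (fun y => (projMat F y *ᵥ w) ⬝ᵥ (projMat F y *ᵥ w)) z
        (Pi.single p 1))
      =ᶠ[nhds x] (fun z => -2 * (w ⬝ᵥ ((projMatP F p z * projMat F z) *ᵥ w))) := by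
    filter_upwards [hΩ.mem_nhds hx] with z hz
    exact S7.stepA hΩ hF hspan hz w p
  rw [Filter.EventuallyEq.fderiv_eq hev]
  have hdM1 : ∀ i j, DifferentiableAt ℝ (fun z => (projMatP F p z * projMat F z) i j) x :=
    S7.differentiableAt_mul_entry (S7.diffPp hΩ hF hspan hx p) (S7.diffPi hΩ hF hspan hx)
  rw [fderiv_const_mul (S7.differentiableAt_dotmul w w hdM1) (-2)]
  simp only [ContinuousLinearMap.smul_apply, smul_eq_mul]
  rw [S7.fderiv_dotmul w w hdM1 q,
    S7.matPD_mul (S7.diffPp hΩ hF hspan hx p) (S7.diffPi hΩ hF hspan hx) q,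
    S7.pdPp hΩ hF hspan hx p q, S7.pdPi hΩ hF hspan hx q]
  exact S7.algFinal (F x) (matPartialDeriv F p x) (matPartialDeriv F q x)
    (matPartialDeriv (matPartialDeriv F p) q x) (S7.huG hspan hx) w _ _ _ _ _
    rfl rfl rfl rfl rfl
end

section
/- For every nonzero x ∈ ℝ^M and all p, q = 1,…,M, the second partial derivative of the map x ↦ x/‖x‖ satisfies ∂²/∂x_q∂x_p (x/‖x‖) = −(1/‖x‖³)[π(x)(δ_pδ_qᵀ + δ_qδ_pᵀ) + (δ_pᵀπ(x)δ_q)I]x, where π(x) := I − xxᵀ/‖x‖² and δ_p is the p-th standard basis vector of ℝ^M. -/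
open Matrix

/-- `π(x) := I − xxᵀ/‖x‖²`, the orthogonal projection onto the orthogonal complement of the
line through `x` (the squared Euclidean norm is written via the dot product). -/
noncomputable def linePerp {M : ℕ} (x : Fin M → ℝ) : Matrix (Fin M) (Fin M) ℝ :=
  1 - (x ⬝ᵥ x)⁻¹ • Matrix.vecMulVec x x


lemma vmv_mulVec {M : ℕ} (u v w : Fin M → ℝ) : Matrix.vecMulVec u v *ᵥ w = (v ⬝ᵥ w) • u := by
  funext i
  simp [Matrix.mulVec, vecMulVec_apply, dotProduct, Finset.sum_mul, Finset.mul_sum,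
    mul_comm, mul_assoc, mul_left_comm]

lemma linePerp_mulVec {M : ℕ} (x w : Fin M → ℝ) :
    linePerp x *ᵥ w = w - ((x ⬝ᵥ x)⁻¹ * (x ⬝ᵥ w)) • x := by
  rw [linePerp, Matrix.sub_mulVec, Matrix.one_mulVec, Matrix.smul_mulVec, vmv_mulVec,
    smul_smul]

lemma dot_pos {M : ℕ} (x : Fin M → ℝ) (hx : x ≠ 0) : 0 < x ⬝ᵥ x := by
  have hnn : 0 ≤ x ⬝ᵥ x := Finset.sum_nonneg fun i _ => mul_self_nonneg _
  rcases hnn.lt_or_eq with h | h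
  · exact h
  · exact absurd ((dotProduct_self_eq_zero).mp h.symm) hx

lemma s_poly {M : ℕ} (x v : Fin M → ℝ) (t : ℝ) :
    (x + t • v) ⬝ᵥ (x + t • v) = x ⬝ᵥ x + (2 * (x ⬝ᵥ v)) * t + (v ⬝ᵥ v) * t ^ 2 := by
  simp [dotProduct_add, add_dotProduct, dotProduct_smul, smul_dotProduct, dotProduct_comm v x]
  ring

lemma s_deriv {M : ℕ} (x v : Fin M → ℝ) :
    HasDerivAt (fun t : ℝ => (x + t • v) ⬝ᵥ (x + t • v)) (2 * (x ⬝ᵥ v)) 0 := by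
  have h : HasDerivAt (fun t : ℝ => x ⬝ᵥ x + (2 * (x ⬝ᵥ v)) * t + (v ⬝ᵥ v) * t ^ 2)
      (2 * (x ⬝ᵥ v)) 0 := by
    have h1 := ((hasDerivAt_id (0:ℝ)).const_mul (2 * (x ⬝ᵥ v))).const_add (x ⬝ᵥ x)
    have h2 := (hasDerivAt_pow 2 (0:ℝ)).const_mul (v ⬝ᵥ v)
    simpa [Pi.add_def] using h1.add h2
  simpa only [s_poly] using h

/-- first-derivative lemma -/
lemma lem1 {M : ℕ} (x v : Fin M → ℝ) (hx : x ≠ 0) :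
    HasLineDerivAt ℝ (fun z : Fin M → ℝ => (Real.sqrt (z ⬝ᵥ z))⁻¹ • z)
      ((Real.sqrt (x ⬝ᵥ x))⁻¹ • v - ((x ⬝ᵥ v) * ((Real.sqrt (x ⬝ᵥ x)) ^ 3)⁻¹) • x) x v := by
  have hs0 : (0:ℝ) < x ⬝ᵥ x := dot_pos x hx
  have hr : 0 < Real.sqrt (x ⬝ᵥ x) := Real.sqrt_pos.mpr hs0
  set r := Real.sqrt (x ⬝ᵥ x) with hrdef
  -- sqrt of s
  have hsq : HasDerivAt (fun t : ℝ => Real.sqrt ((x + t • v) ⬝ᵥ (x + t • v)))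
      (1 / (2 * r) * (2 * (x ⬝ᵥ v))) 0 := by
    have := (Real.hasDerivAt_sqrt (x := (x + (0:ℝ) • v) ⬝ᵥ (x + (0:ℝ) • v)) (by simpa using hs0.ne')).comp 0 (s_deriv x v)
    simpa [Function.comp_def, hrdef] using this
  have hg : HasDerivAt (fun t : ℝ => (Real.sqrt ((x + t • v) ⬝ᵥ (x + t • v)))⁻¹)
      (-(1 / (2 * r) * (2 * (x ⬝ᵥ v))) / r ^ 2) 0 := by
    have := hsq.inv (by simpa [hrdef] using hr.ne')
    simpa [hrdef, Pi.inv_def] using this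
  have key : HasDerivAt (fun t : ℝ =>
      (Real.sqrt ((x + t • v) ⬝ᵥ (x + t • v)))⁻¹ • x
        + (t * (Real.sqrt ((x + t • v) ⬝ᵥ (x + t • v)))⁻¹) • v)
      ((-(1 / (2 * r) * (2 * (x ⬝ᵥ v))) / r ^ 2) • x
        + (1 * (Real.sqrt ((x + (0:ℝ) • v) ⬝ᵥ (x + (0:ℝ) • v)))⁻¹
            + 0 * (-(1 / (2 * r) * (2 * (x ⬝ᵥ v))) / r ^ 2)) • v) 0 := by
    exact (hg.smul_const x).add (((hasDerivAt_id (0:ℝ)).mul hg).smul_const v)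
  rw [HasLineDerivAt]
  have heq : (fun t : ℝ => (fun z : Fin M → ℝ => (Real.sqrt (z ⬝ᵥ z))⁻¹ • z) (x + t • v))
      = fun t : ℝ =>
      (Real.sqrt ((x + t • v) ⬝ᵥ (x + t • v)))⁻¹ • x
        + (t * (Real.sqrt ((x + t • v) ⬝ᵥ (x + t • v)))⁻¹) • v := by
    funext t
    simp [smul_add, smul_smul, mul_comm]
  rw [heq]
  convert key using 1
  case e'_4 => rfl
  case e'_5 => rfl
  case e'_6 => rfl
  have hval : -(1 / (2 * r) * (2 * (x ⬝ᵥ v))) / r ^ 2 = -((x ⬝ᵥ v) * (r ^ 3)⁻¹) := by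
    field_simp
  rw [hval]
  simp [hrdef]
  module

/-- second-derivative lemma (along the line) -/
lemma lem2 {M : ℕ} (x P Q : Fin M → ℝ) (hx : x ≠ 0) :
    HasDerivAt (fun t : ℝ =>
        (Real.sqrt ((x + t • Q) ⬝ᵥ (x + t • Q)))⁻¹ • P
          - (((x + t • Q) ⬝ᵥ P) * ((Real.sqrt ((x + t • Q) ⬝ᵥ (x + t • Q))) ^ 3)⁻¹) • (x + t • Q))
      (-((x ⬝ᵥ Q) * ((Real.sqrt (x ⬝ᵥ x)) ^ 3)⁻¹) • P
        - ((x ⬝ᵥ P) * ((Real.sqrt (x ⬝ᵥ x)) ^ 3)⁻¹) • Q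
        - ((Q ⬝ᵥ P) * ((Real.sqrt (x ⬝ᵥ x)) ^ 3)⁻¹
            - 3 * (x ⬝ᵥ P) * (x ⬝ᵥ Q) * ((Real.sqrt (x ⬝ᵥ x)) ^ 5)⁻¹) • x) 0 := by
  have hs0 : (0:ℝ) < x ⬝ᵥ x := dot_pos x hx
  have hr : 0 < Real.sqrt (x ⬝ᵥ x) := Real.sqrt_pos.mpr hs0
  set r := Real.sqrt (x ⬝ᵥ x) with hrdef
  set B := x ⬝ᵥ Q with hBdef
  set A := x ⬝ᵥ P with hAdef
  have hsq : HasDerivAt (fun t : ℝ => Real.sqrt ((x + t • Q) ⬝ᵥ (x + t • Q)))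
      (1 / (2 * r) * (2 * B)) 0 := by
    have := (Real.hasDerivAt_sqrt (x := (x + (0:ℝ) • Q) ⬝ᵥ (x + (0:ℝ) • Q))
      (by simpa using hs0.ne')).comp 0 (s_deriv x Q)
    simpa [Function.comp_def, hrdef, hBdef] using this
  have hg : HasDerivAt (fun t : ℝ => (Real.sqrt ((x + t • Q) ⬝ᵥ (x + t • Q)))⁻¹)
      (-(1 / (2 * r) * (2 * B)) / r ^ 2) 0 := by
    have := hsq.inv (by simpa [hrdef] using hr.ne')
    simpa [hrdef, Pi.inv_def] using this
  have hc : HasDerivAt (fun t : ℝ => (Real.sqrt ((x + t • Q) ⬝ᵥ (x + t • Q))) ^ 3)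
      ((3:ℕ) * r ^ 2 * (1 / (2 * r) * (2 * B))) 0 := by
    have := hsq.pow 3
    simpa [hrdef, Pi.pow_def] using this
  have hcinv : HasDerivAt (fun t : ℝ => ((Real.sqrt ((x + t • Q) ⬝ᵥ (x + t • Q))) ^ 3)⁻¹)
      (-((3:ℕ) * r ^ 2 * (1 / (2 * r) * (2 * B))) / (r ^ 3) ^ 2) 0 := by
    have := hc.inv (by simpa [hrdef] using pow_ne_zero 3 hr.ne')
    simpa [hrdef, Pi.inv_def] using this
  have ha : HasDerivAt (fun t : ℝ => A + (Q ⬝ᵥ P) * t) (Q ⬝ᵥ P) 0 := by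
    simpa using ((hasDerivAt_id (0:ℝ)).const_mul (Q ⬝ᵥ P)).const_add A
  have h2 : HasDerivAt (fun t : ℝ =>
      (A + (Q ⬝ᵥ P) * t) * ((Real.sqrt ((x + t • Q) ⬝ᵥ (x + t • Q))) ^ 3)⁻¹)
      ((Q ⬝ᵥ P) * (r ^ 3)⁻¹ + A * (-((3:ℕ) * r ^ 2 * (1 / (2 * r) * (2 * B))) / (r ^ 3) ^ 2)) 0 := by
    have := ha.mul hcinv
    simpa [hrdef, Pi.mul_def] using this
  have key := ((hg.smul_const P).sub (h2.smul_const x)).sub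
    (((hasDerivAt_id (0:ℝ)).mul h2).smul_const Q)
  have heq : (fun t : ℝ =>
        (Real.sqrt ((x + t • Q) ⬝ᵥ (x + t • Q)))⁻¹ • P
          - (((x + t • Q) ⬝ᵥ P) * ((Real.sqrt ((x + t • Q) ⬝ᵥ (x + t • Q))) ^ 3)⁻¹) • (x + t • Q))
      = fun t : ℝ =>
        (Real.sqrt ((x + t • Q) ⬝ᵥ (x + t • Q)))⁻¹ • P
          - ((A + (Q ⬝ᵥ P) * t) * ((Real.sqrt ((x + t • Q) ⬝ᵥ (x + t • Q))) ^ 3)⁻¹) • x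
          - (t * ((A + (Q ⬝ᵥ P) * t) * ((Real.sqrt ((x + t • Q) ⬝ᵥ (x + t • Q))) ^ 3)⁻¹)) • Q := by
    funext t
    have hat : (x + t • Q) ⬝ᵥ P = A + (Q ⬝ᵥ P) * t := by
      simp [add_dotProduct, smul_dotProduct, hAdef, mul_comm]
    rw [hat, smul_add, smul_smul]
    module
  rw [heq] at *
  convert key using 1
  case e'_4 => rfl
  case e'_5 => rfl
  case e'_6 => rfl
  case e'_8 => rfl
  have e1 : -(1 / (2 * r) * (2 * B)) / r ^ 2 = -(B * (r ^ 3)⁻¹) := by field_simp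
  have e2 : (Q ⬝ᵥ P) * (r ^ 3)⁻¹ + A * (-((3:ℕ) * r ^ 2 * (1 / (2 * r) * (2 * B))) / (r ^ 3) ^ 2)
      = (Q ⬝ᵥ P) * (r ^ 3)⁻¹ - 3 * A * B * (r ^ 5)⁻¹ := by
    push_cast
    field_simp
    ring
  rw [e1, e2] at key ⊢
  have e3 : (1 : ℝ) * ((A + (Q ⬝ᵥ P) * (0:ℝ)) * ((Real.sqrt ((x + (0:ℝ) • Q) ⬝ᵥ (x + (0:ℝ) • Q))) ^ 3)⁻¹)
      + id (0:ℝ) * ((Q ⬝ᵥ P) * (r ^ 3)⁻¹ - 3 * A * B * (r ^ 5)⁻¹)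
      = A * (r ^ 3)⁻¹ := by
    simp [← hrdef]
  rw [e3]
  module

/-- For every nonzero `x ∈ ℝ^M` and all `p, q = 1,…,M`, the second partial
derivative of the map `x ↦ x/‖x‖` (with `‖x‖ = √(x ⬝ᵥ x)` the Euclidean norm) satisfies
`∂²/∂x_q∂x_p (x/‖x‖) = −(1/‖x‖³)[π(x)(δ_pδ_qᵀ + δ_qδ_pᵀ) + (δ_pᵀπ(x)δ_q)I]x`. -/
theorem stmt9 {M : ℕ} (x : Fin M → ℝ) (hx : x ≠ 0) (p q : Fin M) :
    HasLineDerivAt ℝ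
      (fun y : Fin M → ℝ =>
        lineDeriv ℝ (fun z : Fin M → ℝ => (Real.sqrt (z ⬝ᵥ z))⁻¹ • z) y (Pi.single p 1))
      (-(Real.sqrt (x ⬝ᵥ x) ^ 3)⁻¹ •
        ((linePerp x *
            (Matrix.vecMulVec (Pi.single p 1) (Pi.single q 1)
              + Matrix.vecMulVec (Pi.single q 1) (Pi.single p 1))
          + ((Pi.single p 1 : Fin M → ℝ) ⬝ᵥ (linePerp x *ᵥ Pi.single q 1)) •
              (1 : Matrix (Fin M) (Fin M) ℝ)) *ᵥ x))
      x (Pi.single q 1) := by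
  have hs0 : (0:ℝ) < x ⬝ᵥ x := dot_pos x hx
  have hr : 0 < Real.sqrt (x ⬝ᵥ x) := Real.sqrt_pos.mpr hs0
  set P := (Pi.single p 1 : Fin M → ℝ) with hP
  set Q := (Pi.single q 1 : Fin M → ℝ) with hQ
  have hcont : ContinuousAt (fun t : ℝ => x + t • Q) 0 := by fun_prop
  have hne : ∀ᶠ t in nhds (0:ℝ), x + t • Q ≠ 0 := by
    have := hcont.eventually_ne (y := (0 : Fin M → ℝ)) (by simpa using hx)
    simpa using this
  have hev : (fun t : ℝ =>
        lineDeriv ℝ (fun z : Fin M → ℝ => (Real.sqrt (z ⬝ᵥ z))⁻¹ • z) (x + t • Q) P)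
      =ᶠ[nhds (0:ℝ)] (fun t : ℝ =>
        (Real.sqrt ((x + t • Q) ⬝ᵥ (x + t • Q)))⁻¹ • P
          - (((x + t • Q) ⬝ᵥ P) * ((Real.sqrt ((x + t • Q) ⬝ᵥ (x + t • Q))) ^ 3)⁻¹) • (x + t • Q)) :=
    hne.mono fun t ht => (lem1 (x + t • Q) P ht).lineDeriv
  have key := (lem2 x P Q hx).congr_of_eventuallyEq hev
  have hD : (-(Real.sqrt (x ⬝ᵥ x) ^ 3)⁻¹ •
        ((linePerp x * (Matrix.vecMulVec P Q + Matrix.vecMulVec Q P)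
          + (P ⬝ᵥ (linePerp x *ᵥ Q)) • (1 : Matrix (Fin M) (Fin M) ℝ)) *ᵥ x))
      = (-((x ⬝ᵥ Q) * ((Real.sqrt (x ⬝ᵥ x)) ^ 3)⁻¹) • P
        - ((x ⬝ᵥ P) * ((Real.sqrt (x ⬝ᵥ x)) ^ 3)⁻¹) • Q
        - ((Q ⬝ᵥ P) * ((Real.sqrt (x ⬝ᵥ x)) ^ 3)⁻¹
            - 3 * (x ⬝ᵥ P) * (x ⬝ᵥ Q) * ((Real.sqrt (x ⬝ᵥ x)) ^ 5)⁻¹) • x) := by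
    have h2 : Real.sqrt (x ⬝ᵥ x) ^ 2 = x ⬝ᵥ x := Real.sq_sqrt hs0.le
    rw [Matrix.add_mulVec, ← Matrix.mulVec_mulVec, Matrix.smul_mulVec, Matrix.one_mulVec,
      Matrix.add_mulVec, vmv_mulVec, vmv_mulVec, Matrix.mulVec_add, Matrix.mulVec_smul,
      Matrix.mulVec_smul, linePerp_mulVec, linePerp_mulVec]
    simp only [dotProduct_sub, dotProduct_smul, smul_eq_mul, dotProduct_comm Q x,
      dotProduct_comm P x, dotProduct_comm Q P]
    rw [← h2]
    match_scalars <;> field_simp <;> (try ring) <;> (rw [Real.sqrt_sq hr.le])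
  exact hD ▸ key
end

section
/- Let Ω be an open subset of ℝ^P, let F : Ω → ℝ^{M×N} be entrywise C¹ with columns f₁(x),…,f_N(x) spanning ℝ^M for every x ∈ Ω, and let w ∈ ℝ^N. Suppose that for every x ∈ Ω the N vectors f_n(x) ⊕ Df_n(x)ᵀ(F(x)F(x)ᵀ)⁻¹F(x)w, n = 1,…,N, span ℝ^M ⊕ ℝ^P, where Df_n(x) is the M×P Jacobian matrix of f_n at x. Then there is no δ > 0 and no continuously differentiable curve x : (−δ, δ) → Ω with ẋ(0) ≠ 0 such that (I − Fᵀ(x(t))(F(x(t))Fᵀ(x(t)))⁻¹F(x(t)))w = 0 for all t ∈ (−δ, δ); that is, the zero set {x ∈ Ω : (I − Fᵀ(x)(F(x)Fᵀ(x))⁻¹F(x))w = 0} contains no nonconstant smooth curve. -/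
open Matrix

/-- Determinant of a matrix with entries differentiable in a parameter is differentiable. -/
private lemma aux_det_diffAt {n : ℕ} {B : ℝ → Matrix (Fin n) (Fin n) ℝ} {t : ℝ}
    (h : ∀ i j, DifferentiableAt ℝ (fun s => B s i j) t) :
    DifferentiableAt ℝ (fun s => (B s).det) t := by
  simp only [Matrix.det_apply']
  exact DifferentiableAt.fun_sum fun σ _ =>
    (DifferentiableAt.fun_finsetProd (fun i _ => h (σ i) i)).const_mul _

/-- Entries of the inverse of a matrix with differentiable entries and nonzero determinant
are differentiable. -/
private lemma aux_inv_entry_diffAt {n : ℕ} {B : ℝ → Matrix (Fin n) (Fin n) ℝ} {t : ℝ}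
    (h : ∀ i j, DifferentiableAt ℝ (fun s => B s i j) t)
    (hdet : (B t).det ≠ 0) (i j : Fin n) :
    DifferentiableAt ℝ (fun s => (B s)⁻¹ i j) t := by
  have hadj : DifferentiableAt ℝ (fun s => (B s).adjugate i j) t := by
    simp only [Matrix.adjugate_apply]
    apply aux_det_diffAt
    intro k l
    simp only [Matrix.updateRow_apply]
    by_cases hk : k = j
    · simp [hk]
    · simpa [hk] using h k l
  have hdetd : DifferentiableAt ℝ (fun s => ((B s).det)⁻¹) t :=
    (aux_det_diffAt h).inv hdet
  simp only [Matrix.inv_def, Matrix.smul_apply, Ring.inverse_eq_inv', smul_eq_mul]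
  exact hdetd.mul hadj

/-- A continuous linear functional on `Fin P → ℝ` is determined by its values on basis vectors. -/
private lemma aux_clm_eq_sum {P : ℕ} (L : (Fin P → ℝ) →L[ℝ] ℝ) (v : Fin P → ℝ) :
    L v = ∑ p, v p * L (Pi.single p 1) := by
  have he : ∀ p : Fin P, (fun j => if p = j then (1 : ℝ) else 0) = Pi.single p 1 := by
    intro p; funext j; simp [Pi.single_apply, eq_comm]
  calc L v = L (∑ p, v p • fun j => if p = j then (1 : ℝ) else 0) := by
        rw [← pi_eq_sum_univ]
    _ = ∑ p, v p * L (Pi.single p 1) := by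
        rw [map_sum]
        refine Finset.sum_congr rfl fun p _ => ?_
        rw [he p, L.map_smul, smul_eq_mul]

/-- If the columns of `F` span, then `F * Fᵀ` has nonzero determinant. -/
private lemma aux_det_ne_zero {M N : ℕ} (G : Matrix (Fin M) (Fin N) ℝ)
    (hspan : Submodule.span ℝ (Set.range (fun n : Fin N => fun m : Fin M => G m n)) = ⊤) :
    (G * Gᵀ).det ≠ 0 := by
  intro hd
  obtain ⟨v, hv0, hv⟩ := (Matrix.exists_mulVec_eq_zero_iff).2 hd
  have h1 : Gᵀ *ᵥ v = 0 := by
    have h2 : v ⬝ᵥ ((G * Gᵀ) *ᵥ v) = 0 := by rw [hv]; simp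
    rw [← Matrix.mulVec_mulVec, Matrix.dotProduct_mulVec, ← Matrix.mulVec_transpose] at h2
    exact dotProduct_self_eq_zero.mp h2
  -- v is orthogonal to all columns, hence to everything, hence v = 0
  let ψ : (Fin M → ℝ) →ₗ[ℝ] ℝ :=
    { toFun := fun u => u ⬝ᵥ v
      map_add' := fun a b => add_dotProduct a b v
      map_smul' := fun c a => smul_dotProduct c a v }
  have hker : Submodule.span ℝ (Set.range (fun n : Fin N => fun m : Fin M => G m n))
      ≤ LinearMap.ker ψ := by
    rw [Submodule.span_le]
    rintro _ ⟨n, rfl⟩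
    have := congrFun h1 n
    simp only [Matrix.mulVec, dotProduct, Matrix.transpose_apply, Pi.zero_apply] at this
    simpa [ψ, LinearMap.mem_ker, dotProduct] using this
  rw [hspan] at hker
  have : ψ v = 0 := hker Submodule.mem_top
  exact hv0 (dotProduct_self_eq_zero.mp this)

/-- Theorem 2 of the paper: Let `Ω ⊆ ℝ^P` be open, let `F : Ω → ℝ^{M×N}` be
entrywise `C¹` with columns `f₁(x),…,f_N(x)` spanning `ℝ^M` for every `x ∈ Ω`, and let
`w ∈ ℝ^N`.  If for every `x ∈ Ω` the `N` vectors
`f_n(x) ⊕ Df_n(x)ᵀ(F(x)F(x)ᵀ)⁻¹F(x)w` span `ℝ^M ⊕ ℝ^P` (where `Df_n(x)` is the `M × P`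
Jacobian of the `n`-th column, taken entrywise), then there is no nonconstant `C¹` curve
`γ : (−δ, δ) → Ω` with `γ̇(0) ≠ 0` lying in the zero set
`{x ∈ Ω : (I − Fᵀ(x)(F(x)Fᵀ(x))⁻¹F(x))w = 0}` of the error function. -/
theorem stmt13 {P M N : ℕ} {Ω : Set (Fin P → ℝ)} (hΩ : IsOpen Ω)
    (F : (Fin P → ℝ) → Matrix (Fin M) (Fin N) ℝ)
    (hF : ∀ i j, ContDiffOn ℝ 1 (fun x => F x i j) Ω)
    (hspan : ∀ x ∈ Ω,
      Submodule.span ℝ (Set.range (fun n : Fin N => fun m : Fin M => F x m n)) = ⊤)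
    (w : Fin N → ℝ)
    (hframe : ∀ x ∈ Ω,
      Submodule.span ℝ (Set.range (fun n : Fin N =>
        (((fun m : Fin M => F x m n),
          (Matrix.of fun (m : Fin M) (p : Fin P) =>
              fderiv ℝ (fun y => F y m n) x (Pi.single p 1))ᵀ *ᵥ
            ((F x * (F x)ᵀ)⁻¹ *ᵥ (F x *ᵥ w))) : (Fin M → ℝ) × (Fin P → ℝ)))) = ⊤) :
    ¬ ∃ δ : ℝ, 0 < δ ∧ ∃ γ : ℝ → Fin P → ℝ,
        ContDiffOn ℝ 1 γ (Set.Ioo (-δ) δ) ∧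
        (∀ t ∈ Set.Ioo (-δ) δ, γ t ∈ Ω) ∧
        deriv γ 0 ≠ 0 ∧
        ∀ t ∈ Set.Ioo (-δ) δ,
          (1 - (F (γ t))ᵀ * (F (γ t) * (F (γ t))ᵀ)⁻¹ * F (γ t)) *ᵥ w = 0 := by
  rintro ⟨δ, hδ, γ, hγC, hγΩ, hγ'ne, hzero⟩
  have h0 : (0 : ℝ) ∈ Set.Ioo (-δ) δ := ⟨by linarith, hδ⟩
  have hIoo : Set.Ioo (-δ) δ ∈ nhds (0 : ℝ) := isOpen_Ioo.mem_nhds h0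
  have hx : γ 0 ∈ Ω := hγΩ 0 h0
  have hΩnhds : Ω ∈ nhds (γ 0) := hΩ.mem_nhds hx
  -- differentiability of γ at 0
  have hγd : DifferentiableAt ℝ γ 0 :=
    (hγC.contDiffAt hIoo).differentiableAt one_ne_zero
  -- entries of F differentiable at γ 0
  have hFd : ∀ m n, DifferentiableAt ℝ (fun y => F y m n) (γ 0) := fun m n =>
    ((hF m n).contDiffAt hΩnhds).differentiableAt one_ne_zero
  -- derivative of entries along the curve
  have hgd : ∀ m n, HasDerivAt (fun t => F (γ t) m n)
      (fderiv ℝ (fun y => F y m n) (γ 0) (deriv γ 0)) 0 := fun m n =>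
    (hFd m n).hasFDerivAt.comp_hasDerivAt 0 hγd.hasDerivAt
  -- A t = F(γ t) F(γ t)ᵀ has differentiable entries at 0
  have hAentry : ∀ i j, DifferentiableAt ℝ
      (fun t => (F (γ t) * (F (γ t))ᵀ) i j) 0 := by
    intro i j
    have heq : (fun t => (F (γ t) * (F (γ t))ᵀ) i j)
        = fun t => ∑ k, F (γ t) i k * F (γ t) j k := by
      funext t; simp [Matrix.mul_apply]
    rw [heq]
    exact DifferentiableAt.fun_sum fun k _ =>
      (hgd i k).differentiableAt.mul (hgd j k).differentiableAt
  have hA0det : (F (γ 0) * (F (γ 0))ᵀ).det ≠ 0 :=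
    aux_det_ne_zero (F (γ 0)) (hspan (γ 0) hx)
  -- λ(t) = (F F ᵀ)⁻¹ F w along the curve, componentwise differentiable at 0
  have hlamd : ∀ m, DifferentiableAt ℝ
      (fun t => ((F (γ t) * (F (γ t))ᵀ)⁻¹ *ᵥ (F (γ t) *ᵥ w)) m) 0 := by
    intro m
    have heq : (fun t => ((F (γ t) * (F (γ t))ᵀ)⁻¹ *ᵥ (F (γ t) *ᵥ w)) m)
        = fun t => ∑ j, (F (γ t) * (F (γ t))ᵀ)⁻¹ m j * (∑ k, F (γ t) j k * w k) := by
      funext t; simp [Matrix.mulVec, dotProduct]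
    rw [heq]
    refine DifferentiableAt.fun_sum fun j _ => DifferentiableAt.mul ?_ ?_
    · exact aux_inv_entry_diffAt hAentry hA0det m j
    · exact DifferentiableAt.fun_sum fun k _ => (hgd j k).differentiableAt.mul_const _
  -- the constraint w = Fᵀ λ along the curve, componentwise
  have hconst : ∀ t ∈ Set.Ioo (-δ) δ, ∀ n,
      ∑ m, F (γ t) m n * ((F (γ t) * (F (γ t))ᵀ)⁻¹ *ᵥ (F (γ t) *ᵥ w)) m = w n := by
    intro t ht n
    have h1 := hzero t ht
    have h3 : w - ((F (γ t))ᵀ * (F (γ t) * (F (γ t))ᵀ)⁻¹ * F (γ t)) *ᵥ w = 0 := by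
      simpa [Matrix.sub_mulVec, Matrix.one_mulVec] using h1
    have h2 : ((F (γ t))ᵀ * (F (γ t) * (F (γ t))ᵀ)⁻¹ * F (γ t)) *ᵥ w = w :=
      (sub_eq_zero.mp h3).symm
    have h4 := congrFun h2 n
    rw [← Matrix.mulVec_mulVec, ← Matrix.mulVec_mulVec] at h4
    simpa [Matrix.mulVec, dotProduct, Matrix.transpose_apply] using h4
  -- differentiate the constraint at 0
  have hkey : ∀ n,
      (∑ m, fderiv ℝ (fun y => F y m n) (γ 0) (deriv γ 0)
          * ((F (γ 0) * (F (γ 0))ᵀ)⁻¹ *ᵥ (F (γ 0) *ᵥ w)) m)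
      + (∑ m, F (γ 0) m n
          * deriv (fun t => ((F (γ t) * (F (γ t))ᵀ)⁻¹ *ᵥ (F (γ t) *ᵥ w)) m) 0) = 0 := by
    intro n
    have hH : HasDerivAt
        (fun t => ∑ m, F (γ t) m n * ((F (γ t) * (F (γ t))ᵀ)⁻¹ *ᵥ (F (γ t) *ᵥ w)) m)
        (∑ m, (fderiv ℝ (fun y => F y m n) (γ 0) (deriv γ 0)
            * ((F (γ 0) * (F (γ 0))ᵀ)⁻¹ *ᵥ (F (γ 0) *ᵥ w)) m
          + F (γ 0) m n
            * deriv (fun t => ((F (γ t) * (F (γ t))ᵀ)⁻¹ *ᵥ (F (γ t) *ᵥ w)) m) 0)) 0 := by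
      exact HasDerivAt.fun_sum fun m _ => (hgd m n).mul (hlamd m).hasDerivAt
    have hEq : (fun t => ∑ m, F (γ t) m n * ((F (γ t) * (F (γ t))ᵀ)⁻¹ *ᵥ (F (γ t) *ᵥ w)) m)
        =ᶠ[nhds (0 : ℝ)] fun _ => w n :=
      Filter.eventuallyEq_of_mem hIoo (fun t ht => hconst t ht n)
    have hd0 := hEq.deriv_eq
    rw [hH.deriv, deriv_const'] at hd0
    rw [← Finset.sum_add_distrib]
    exact hd0
  -- build the annihilating functional
  set b : Fin M → ℝ :=
    fun m => deriv (fun t => ((F (γ t) * (F (γ t))ᵀ)⁻¹ *ᵥ (F (γ t) *ᵥ w)) m) 0 with hb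
  set c : Fin P → ℝ := deriv γ 0 with hc
  let φ : ((Fin M → ℝ) × (Fin P → ℝ)) →ₗ[ℝ] ℝ :=
    { toFun := fun uv => uv.1 ⬝ᵥ b + uv.2 ⬝ᵥ c
      map_add' := by
        intro u v
        simp [add_dotProduct]
        ring
      map_smul' := by
        intro r u
        simp [smul_dotProduct, smul_eq_mul]
        ring }
  have hφ0 : ∀ n : Fin N, φ ((fun m : Fin M => F (γ 0) m n),
      (Matrix.of fun (m : Fin M) (p : Fin P) =>
          fderiv ℝ (fun y => F y m n) (γ 0) (Pi.single p 1))ᵀ *ᵥ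
        ((F (γ 0) * (F (γ 0))ᵀ)⁻¹ *ᵥ (F (γ 0) *ᵥ w))) = 0 := by
    intro n
    have hk := hkey n
    have hrw : ∀ m : Fin M, fderiv ℝ (fun y => F y m n) (γ 0) (deriv γ 0)
        = ∑ p, deriv γ 0 p * fderiv ℝ (fun y => F y m n) (γ 0) (Pi.single p 1) :=
      fun m => aux_clm_eq_sum _ _
    simp only [hc, hrw] at hk
    show (fun m : Fin M => F (γ 0) m n) ⬝ᵥ b
        + ((Matrix.of fun (m : Fin M) (p : Fin P) =>
            fderiv ℝ (fun y => F y m n) (γ 0) (Pi.single p 1))ᵀ *ᵥ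
          ((F (γ 0) * (F (γ 0))ᵀ)⁻¹ *ᵥ (F (γ 0) *ᵥ w))) ⬝ᵥ c = 0
    have e2 : ((Matrix.of fun (m : Fin M) (p : Fin P) =>
            fderiv ℝ (fun y => F y m n) (γ 0) (Pi.single p 1))ᵀ *ᵥ
          ((F (γ 0) * (F (γ 0))ᵀ)⁻¹ *ᵥ (F (γ 0) *ᵥ w))) ⬝ᵥ c
        = ∑ m, (∑ p, deriv γ 0 p * fderiv ℝ (fun y => F y m n) (γ 0) (Pi.single p 1))
            * ((F (γ 0) * (F (γ 0))ᵀ)⁻¹ *ᵥ (F (γ 0) *ᵥ w)) m := by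
      simp only [dotProduct, Matrix.mulVec, Matrix.transpose_apply, Matrix.of_apply, hc]
      simp_rw [Finset.sum_mul]
      rw [Finset.sum_comm]
      refine Finset.sum_congr rfl fun m _ => Finset.sum_congr rfl fun p _ => ?_
      ring
    rw [e2]
    have e1 : (fun m : Fin M => F (γ 0) m n) ⬝ᵥ b
        = ∑ m, F (γ 0) m n * b m := rfl
    rw [e1, hb]
    linarith [hk]
  -- use the spanning hypothesis
  have hspanle : Submodule.span ℝ (Set.range (fun n : Fin N =>
      (((fun m : Fin M => F (γ 0) m n),
        (Matrix.of fun (m : Fin M) (p : Fin P) =>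
            fderiv ℝ (fun y => F y m n) (γ 0) (Pi.single p 1))ᵀ *ᵥ
          ((F (γ 0) * (F (γ 0))ᵀ)⁻¹ *ᵥ (F (γ 0) *ᵥ w))) : (Fin M → ℝ) × (Fin P → ℝ))))
      ≤ LinearMap.ker φ := by
    rw [Submodule.span_le]
    rintro _ ⟨n, rfl⟩
    exact hφ0 n
  rw [hframe (γ 0) hx] at hspanle
  have hc0 : deriv γ 0 = 0 := by
    funext p
    have h := hspanle (Submodule.mem_top (x := ((0 : Fin M → ℝ), Pi.single p (1 : ℝ))))
    simp only [LinearMap.mem_ker, LinearMap.coe_mk, AddHom.coe_mk, φ,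
      zero_dotProduct, zero_add] at h
    rw [hc] at h
    simpa [dotProduct, Pi.single_apply] using h
  exact hγ'ne hc0
end

section
/- Let Ω ⊆ ℝ^M be open, let φ₁,…,φ_N ∈ C²(Ω), let F(x) be the M×N matrix whose n-th column is ∇φ_n(x), and let w : [t₀, t₁] → ℝ^N be continuously differentiable. Define the functional Ê(x) := ∫_{t₀}^{t₁} ‖Fᵀ(x(t))ẋ(t) − w(t)‖² dt on curves x ∈ C¹([t₀, t₁], Ω). If x ∈ C¹([t₀, t₁], Ω) minimizes Ê, i.e. Ê(x) ≤ Ê(y) for all y ∈ C¹([t₀, t₁], Ω), then x satisfies the Euler–Lagrange equation F(x(t)) (d/dt)[Fᵀ(x(t))ẋ(t) − w(t)] = 0 for all t ∈ [t₀, t₁]. -/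
open Matrix

/-- The `M × N` matrix whose `n`-th column is the gradient `∇φ_n(x)` (entries are the
directional derivatives of `φ_n` along the standard basis vectors). -/
noncomputable def synthesisMat {M N : ℕ} (φ : Fin N → (Fin M → ℝ) → ℝ) (x : Fin M → ℝ) :
    Matrix (Fin M) (Fin N) ℝ :=
  Matrix.of fun m n => fderiv ℝ (φ n) x (Pi.single m 1)

/-- The functional `Ê(y) := ∫_{t₀}^{t₁} ‖Fᵀ(y(t))ẏ(t) − w(t)‖² dt`, with the squared
Euclidean norm written via the dot product and `ẏ` the time derivative on `[t₀, t₁]`. -/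
noncomputable def funcE {M N : ℕ} (φ : Fin N → (Fin M → ℝ) → ℝ) (w : ℝ → Fin N → ℝ)
    (t₀ t₁ : ℝ) (y : ℝ → Fin M → ℝ) : ℝ :=
  ∫ t in t₀..t₁,
    ((synthesisMat φ (y t))ᵀ *ᵥ derivWithin y (Set.Icc t₀ t₁) t - w t) ⬝ᵥ
      ((synthesisMat φ (y t))ᵀ *ᵥ derivWithin y (Set.Icc t₀ t₁) t - w t)

open Set MeasureTheory intervalIntegral


/-- A continuous nonnegative function on `[a,b]` with zero integral vanishes. -/
lemma contOn_nonneg_integral_zero {a b : ℝ} (hab : a < b) (g : ℝ → ℝ)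
    (hg : ContinuousOn g (Set.Icc a b)) (hnn : ∀ s ∈ Set.Icc a b, 0 ≤ g s)
    (hint : (∫ s in a..b, g s) = 0) : ∀ s ∈ Set.Icc a b, g s = 0 := by
  intro s hs
  by_contra hne
  have hpos : 0 < g s := lt_of_le_of_ne (hnn s hs) (Ne.symm hne)
  have hev : ∀ᶠ u in nhdsWithin s (Set.Icc a b), g s / 2 < g u :=
    (hg s hs).eventually (eventually_gt_nhds (half_lt_self hpos))
  rw [Filter.Eventually, Metric.mem_nhdsWithin_iff] at hev
  obtain ⟨δ, hδpos, hδ⟩ := hev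
  set α := max a (s - δ/2) with hα_def
  set β := min b (s + δ/2) with hβ_def
  have haα : a ≤ α := le_max_left _ _
  have hβb : β ≤ b := min_le_left _ _
  have hαs : α ≤ s := max_le hs.1 (by linarith)
  have hsβ : s ≤ β := le_min hs.2 (by linarith)
  have hαβ : α < β := by
    rcases lt_or_eq_of_le hs.2 with h | h
    · exact lt_of_le_of_lt hαs (lt_min h (by linarith))
    · have : α < s := lt_of_lt_of_le (max_lt (h ▸ hab) (by linarith)) le_rfl
      exact lt_of_lt_of_le this hsβ
  have hsub : Set.Icc α β ⊆ Set.Icc a b := Set.Icc_subset_Icc haα hβb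
  have hgt : ∀ u ∈ Set.Icc α β, g s / 2 < g u := by
    intro u hu
    apply hδ
    refine ⟨Metric.mem_ball.2 ?_, hsub hu⟩
    rw [Real.dist_eq, abs_lt]
    constructor
    · have h' : s - δ/2 ≤ α := le_max_right _ _
      have := hu.1; linarith
    · have h' : β ≤ s + δ/2 := min_le_right _ _
      have := hu.2; linarith
  have hint1 : IntervalIntegrable g volume a α := by
    apply (hg.mono _).intervalIntegrable
    rw [Set.uIcc_of_le haα]; exact Set.Icc_subset_Icc le_rfl (le_trans hαs hs.2)
  have hint2 : IntervalIntegrable g volume α β := by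
    apply (hg.mono _).intervalIntegrable
    rw [Set.uIcc_of_le hαβ.le]; exact hsub
  have hint3 : IntervalIntegrable g volume β b := by
    apply (hg.mono _).intervalIntegrable
    rw [Set.uIcc_of_le hβb]; exact Set.Icc_subset_Icc (le_trans hs.1 hsβ) le_rfl
  have hsplit : (∫ u in a..b, g u)
      = (∫ u in a..α, g u) + (∫ u in α..β, g u) + (∫ u in β..b, g u) := by
    rw [integral_add_adjacent_intervals hint1 hint2,
      integral_add_adjacent_intervals (hint1.trans hint2) hint3]
  have h1 : 0 ≤ ∫ u in a..α, g u := by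
    apply intervalIntegral.integral_nonneg haα
    intro u hu; exact hnn u ⟨hu.1, le_trans hu.2 (le_trans hαs hs.2)⟩
  have h3 : 0 ≤ ∫ u in β..b, g u := by
    apply intervalIntegral.integral_nonneg hβb
    intro u hu; exact hnn u ⟨le_trans (le_trans hs.1 hsβ) hu.1, hu.2⟩
  have h2 : 0 < ∫ u in α..β, g u := by
    apply intervalIntegral_pos_of_pos_on hint2 _ hαβ
    intro u hu
    exact lt_trans (half_pos hpos) (hgt u (Set.Ioo_subset_Icc_self hu))
  rw [hsplit] at hint
  linarith

/-- du Bois-Reymond lemma with free endpoints (integrated form). -/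
lemma dbr_lemma {t₀ t₁ : ℝ} (ht : t₀ < t₁) (a b : ℝ → ℝ)
    (ha : ContinuousOn a (Set.Icc t₀ t₁)) (hb : ContinuousOn b (Set.Icc t₀ t₁))
    (h : ∀ ρ : ℝ → ℝ, ContDiffOn ℝ 1 ρ (Set.Icc t₀ t₁) →
      (∫ t in t₀..t₁, (ρ t * a t + derivWithin ρ (Set.Icc t₀ t₁) t * b t)) = 0) :
    ∀ t ∈ Set.Icc t₀ t₁, HasDerivWithinAt b (a t) (Set.Icc t₀ t₁) t := by
  set I := Set.Icc t₀ t₁ with hI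
  have hUD : UniqueDiffOn ℝ I := uniqueDiffOn_Icc ht
  have haInt : ∀ s ∈ I, IntervalIntegrable a volume t₀ s := by
    intro s hs
    apply (ha.mono _).intervalIntegrable
    rw [Set.uIcc_of_le hs.1]
    exact Set.Icc_subset_Icc le_rfl hs.2
  set A : ℝ → ℝ := fun s => ∫ τ in t₀..s, a τ with hA_def
  have hA : ∀ t ∈ I, HasDerivWithinAt A (a t) I t := by
    intro t htI
    haveI : Fact (t ∈ Set.Icc t₀ t₁) := ⟨htI⟩
    exact integral_hasDerivWithinAt_right (haInt t htI)
      (ha.stronglyMeasurableAtFilter_nhdsWithin measurableSet_Icc t)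
      (ha t htI)
  have hAcont : ContinuousOn A I := fun t htI => (hA t htI).continuousWithinAt
  -- integration by parts: for any C¹ ρ on I, ∫ (ρ' A + ρ a) = ρ t₁ * A t₁
  have parts : ∀ ρ : ℝ → ℝ, ContDiffOn ℝ 1 ρ I →
      (∫ t in t₀..t₁, (derivWithin ρ I t * A t + ρ t * a t)) = ρ t₁ * A t₁ := by
    intro ρ hρ
    have hDρ : ∀ s ∈ Set.uIcc t₀ t₁, HasDerivWithinAt ρ (derivWithin ρ I s) (Set.uIcc t₀ t₁) s := by
      rw [Set.uIcc_of_le ht.le]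
      intro s hs
      exact ((hρ.differentiableOn one_ne_zero) s hs).hasDerivWithinAt
    have hDA : ∀ s ∈ Set.uIcc t₀ t₁, HasDerivWithinAt A (a s) (Set.uIcc t₀ t₁) s := by
      rw [Set.uIcc_of_le ht.le]; exact hA
    have hρ'int : IntervalIntegrable (derivWithin ρ I) volume t₀ t₁ := by
      apply ContinuousOn.intervalIntegrable
      rw [Set.uIcc_of_le ht.le]
      exact hρ.continuousOn_derivWithin hUD le_rfl
    have haint : IntervalIntegrable a volume t₀ t₁ := by
      apply ContinuousOn.intervalIntegrable; rw [Set.uIcc_of_le ht.le]; exact ha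
    have := integral_deriv_mul_eq_sub_of_hasDerivWithinAt hDρ hDA hρ'int haint
    rw [this]
    have : A t₀ = 0 := by simp [hA_def]
    rw [this]; ring
  -- the test function ρ(s) = ∫_{t₀}^s (ψ - c) with ψ = b - A and c the mean of ψ
  set ψ : ℝ → ℝ := fun s => b s - A s with hψ_def
  have hψcont : ContinuousOn ψ I := hb.sub hAcont
  have hψint : IntervalIntegrable ψ volume t₀ t₁ := by
    apply ContinuousOn.intervalIntegrable; rw [Set.uIcc_of_le ht.le]; exact hψcont
  set c : ℝ := (∫ τ in t₀..t₁, ψ τ) / (t₁ - t₀) with hc_def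
  set f : ℝ → ℝ := fun s => ψ s - c with hf_def
  have hfcont : ContinuousOn f I := hψcont.sub continuousOn_const
  have hfInt : ∀ s ∈ I, IntervalIntegrable f volume t₀ s := by
    intro s hs
    apply (hfcont.mono _).intervalIntegrable
    rw [Set.uIcc_of_le hs.1]
    exact Set.Icc_subset_Icc le_rfl hs.2
  have hne : t₁ - t₀ ≠ 0 := sub_ne_zero.2 ht.ne'
  have hintf : (∫ τ in t₀..t₁, f τ) = 0 := by
    simp only [hf_def]
    rw [intervalIntegral.integral_sub hψint intervalIntegrable_const,
      intervalIntegral.integral_const, hc_def, smul_eq_mul, mul_comm,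
      div_mul_cancel₀ _ hne, sub_self]
  set ρ : ℝ → ℝ := fun s => ∫ τ in t₀..s, f τ with hρ_def
  have hρD : ∀ t ∈ I, HasDerivWithinAt ρ (f t) I t := by
    intro t htI
    haveI : Fact (t ∈ Set.Icc t₀ t₁) := ⟨htI⟩
    exact integral_hasDerivWithinAt_right (hfInt t htI)
      (hfcont.stronglyMeasurableAtFilter_nhdsWithin measurableSet_Icc t)
      (hfcont t htI)
  have hρdiff : DifferentiableOn ℝ ρ I := fun t htI => ((hρD t htI).differentiableWithinAt)
  have hρ' : ∀ t ∈ I, derivWithin ρ I t = f t := by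
    intro t htI
    exact (hρD t htI).derivWithin (hUD t htI)
  have hρC1 : ContDiffOn ℝ 1 ρ I := by
    rw [show (1 : WithTop ℕ∞) = 0 + 1 by norm_num, contDiffOn_succ_iff_derivWithin hUD]
    refine ⟨hρdiff, by simp, ?_⟩
    rw [contDiffOn_zero]
    exact hfcont.congr hρ'
  have hρt₁ : ρ t₁ = 0 := hintf
  have hρ'cont : ContinuousOn (derivWithin ρ I) I := hρC1.continuousOn_derivWithin hUD le_rfl
  -- combine hypothesis and parts: ∫ f ψ = 0
  have key : (∫ t in t₀..t₁, f t * ψ t) = 0 := by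
    have h1 := h ρ hρC1
    have h2 := parts ρ hρC1
    rw [hρt₁, zero_mul] at h2
    have e1 : (∫ t in t₀..t₁, (ρ t * a t + derivWithin ρ I t * b t))
        - (∫ t in t₀..t₁, (derivWithin ρ I t * A t + ρ t * a t))
        = ∫ t in t₀..t₁, derivWithin ρ I t * ψ t := by
      rw [← intervalIntegral.integral_sub]
      · apply intervalIntegral.integral_congr
        intro s hs
        show (ρ s * a s + derivWithin ρ I s * b s) - (derivWithin ρ I s * A s + ρ s * a s)
          = derivWithin ρ I s * ψ s
        simp only [hψ_def]
        ring
      · apply ContinuousOn.intervalIntegrable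
        rw [Set.uIcc_of_le ht.le]
        exact ((hρC1.continuousOn.mul ha).add (hρ'cont.mul hb))
      · apply ContinuousOn.intervalIntegrable
        rw [Set.uIcc_of_le ht.le]
        exact ((hρ'cont.mul hAcont).add (hρC1.continuousOn.mul ha))
    rw [h1, h2, zero_sub, neg_zero] at e1
    have e2 : (∫ t in t₀..t₁, derivWithin ρ I t * ψ t) = ∫ t in t₀..t₁, f t * ψ t := by
      apply intervalIntegral.integral_congr
      intro s hs
      rw [Set.uIcc_of_le ht.le] at hs
      show derivWithin ρ I s * ψ s = f s * ψ s
      rw [hρ' s hs]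
    rw [e2] at e1
    exact e1.symm
  have hfint01 : IntervalIntegrable f volume t₀ t₁ := hfInt t₁ ⟨ht.le, le_rfl⟩
  have hfψint : IntervalIntegrable (fun t => f t * ψ t) volume t₀ t₁ := by
    apply ContinuousOn.intervalIntegrable; rw [Set.uIcc_of_le ht.le]; exact hfcont.mul hψcont
  have key2 : (∫ t in t₀..t₁, f t * f t) = 0 := by
    have hcongr : (∫ t in t₀..t₁, f t * f t)
        = ∫ t in t₀..t₁, (f t * ψ t - c * f t) := by
      apply intervalIntegral.integral_congr
      intro s hs
      show f s * f s = f s * ψ s - c * f s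
      simp only [hf_def]; ring
    rw [hcongr, intervalIntegral.integral_sub hfψint (hfint01.const_mul c), key,
      intervalIntegral.integral_const_mul, hintf, mul_zero, sub_zero]
  -- conclude f = 0 on I, i.e. b = A + c on I
  have hf0 : ∀ s ∈ I, f s = 0 := by
    intro s hs
    have := contOn_nonneg_integral_zero ht (fun t => f t * f t) (hfcont.mul hfcont)
      (fun t _ => mul_self_nonneg (f t)) key2 s hs
    exact mul_self_eq_zero.1 this
  intro t htI
  apply HasDerivWithinAt.congr (f := fun s => A s + c) ((hA t htI).add_const c)
  · intro y hy
    have := hf0 y hy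
    simp only [hf_def, hψ_def] at this
    linarith
  · have := hf0 t htI
    simp only [hf_def, hψ_def] at this
    linarith

/-- `Fᵀ(x(t))ẋ(t) - w(t)` as a function of `t`. -/
noncomputable def gC {M N : ℕ} (φ : Fin N → (Fin M → ℝ) → ℝ) (w : ℝ → Fin N → ℝ)
    (t₀ t₁ : ℝ) (x : ℝ → Fin M → ℝ) (t : ℝ) : Fin N → ℝ :=
  (synthesisMat φ (x t))ᵀ *ᵥ derivWithin x (Set.Icc t₀ t₁) t - w t

/-- coefficient of `ρ` in the first variation along direction `v`. -/
noncomputable def aF {M N : ℕ} (φ : Fin N → (Fin M → ℝ) → ℝ) (w : ℝ → Fin N → ℝ)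
    (t₀ t₁ : ℝ) (x : ℝ → Fin M → ℝ) (v : Fin M → ℝ) (t : ℝ) : ℝ :=
  ∑ n, gC φ w t₀ t₁ x t n *
    ∑ m, fderiv ℝ (fun p => fderiv ℝ (φ n) p (Pi.single m 1)) (x t) v *
      derivWithin x (Set.Icc t₀ t₁) t m

/-- coefficient of `ρ'` in the first variation along direction `v`. -/
noncomputable def bF {M N : ℕ} (φ : Fin N → (Fin M → ℝ) → ℝ) (w : ℝ → Fin N → ℝ)
    (t₀ t₁ : ℝ) (x : ℝ → Fin M → ℝ) (v : Fin M → ℝ) (t : ℝ) : ℝ :=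
  ∑ n, gC φ w t₀ t₁ x t n * ∑ m, fderiv ℝ (φ n) (x t) (Pi.single m 1) * v m

set_option maxHeartbeats 2000000 in
lemma firstvar {M N : ℕ} {Ω : Set (Fin M → ℝ)} (hΩ : IsOpen Ω)
    (φ : Fin N → (Fin M → ℝ) → ℝ) (hφ : ∀ n, ContDiffOn ℝ 2 (φ n) Ω)
    (t₀ t₁ : ℝ) (ht : t₀ < t₁)
    (w : ℝ → Fin N → ℝ) (hw : ContDiffOn ℝ 1 w (Set.Icc t₀ t₁))
    (x : ℝ → Fin M → ℝ) (hx : ContDiffOn ℝ 1 x (Set.Icc t₀ t₁))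
    (hxΩ : ∀ t ∈ Set.Icc t₀ t₁, x t ∈ Ω)
    (hmin : ∀ y : ℝ → Fin M → ℝ, ContDiffOn ℝ 1 y (Set.Icc t₀ t₁) →
      (∀ t ∈ Set.Icc t₀ t₁, y t ∈ Ω) → funcE φ w t₀ t₁ x ≤ funcE φ w t₀ t₁ y)
    (v : Fin M → ℝ) (ρ : ℝ → ℝ) (hρ : ContDiffOn ℝ 1 ρ (Set.Icc t₀ t₁)) :
    (∫ t in t₀..t₁, (ρ t * aF φ w t₀ t₁ x v t
      + derivWithin ρ (Set.Icc t₀ t₁) t * bF φ w t₀ t₁ x v t)) = 0 := by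
  set I := Set.Icc t₀ t₁ with hI
  have hUD : UniqueDiffOn ℝ I := uniqueDiffOn_Icc ht
  set x' : ℝ → Fin M → ℝ := derivWithin x I with hx'
  set ρ' : ℝ → ℝ := derivWithin ρ I with hρ'
  have hx'c : ContinuousOn x' I := hx.continuousOn_derivWithin hUD le_rfl
  have hρ'c : ContinuousOn ρ' I := hρ.continuousOn_derivWithin hUD le_rfl
  -- the entries of Fᵀ
  set Fe : Fin N → Fin M → (Fin M → ℝ) → ℝ :=
    fun n m p => fderiv ℝ (φ n) p (Pi.single m 1) with hFe
  have hFeC1 : ∀ n m, ContDiffOn ℝ 1 (Fe n m) Ω := by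
    intro n m
    have h1 : ContDiffOn ℝ 1 (fderiv ℝ (φ n)) Ω :=
      (hφ n).fderiv_of_isOpen hΩ (by norm_num)
    exact (ContinuousLinearMap.apply ℝ ℝ (Pi.single m 1)).contDiff.comp_contDiffOn h1
  have hFeCont : ∀ n m, ContinuousOn (Fe n m) Ω := fun n m => (hFeC1 n m).continuousOn
  have hDFeCont : ∀ n m, ContinuousOn (fun p => fderiv ℝ (Fe n m) p) Ω :=
    fun n m => (hFeC1 n m).continuousOn_fderiv_of_isOpen hΩ le_rfl
  have hFeDiff : ∀ n m, ∀ p ∈ Ω, DifferentiableAt ℝ (Fe n m) p := by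
    intro n m p hp
    exact ((hFeC1 n m).differentiableOn one_ne_zero).differentiableAt (hΩ.mem_nhds hp)
  -- a compact tube around the curve
  have hK : IsCompact (x '' I) := isCompact_Icc.image_of_continuousOn hx.continuousOn
  obtain ⟨r, hr, hrK⟩ := hK.exists_thickening_subset_open hΩ
    (by rintro - ⟨t, htI, rfl⟩; exact hxΩ t htI)
  obtain ⟨R, hR⟩ := isCompact_Icc.exists_bound_of_continuousOn hρ.continuousOn
  have hR0 : 0 ≤ R := le_trans (norm_nonneg _) (hR t₀ ⟨le_rfl, ht.le⟩)
  set δ : ℝ := r / ((R + 1) * (‖v‖ + 1) + 1) with hδdef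
  have hδ : 0 < δ := by
    apply div_pos hr
    positivity
  have hmem : ∀ ε : ℝ, |ε| ≤ δ → ∀ t ∈ I, x t + (ε * ρ t) • v ∈ Ω := by
    intro ε hε t htI
    apply hrK
    rw [Metric.mem_thickening_iff]
    refine ⟨x t, ⟨t, htI, rfl⟩, ?_⟩
    rw [dist_eq_norm, add_sub_cancel_left, norm_smul, Real.norm_eq_abs, abs_mul]
    have h1 : |ρ t| ≤ R := by have := hR t htI; rwa [Real.norm_eq_abs] at this
    have h2 : |ε| * |ρ t| * ‖v‖ ≤ δ * ((R + 1) * (‖v‖ + 1)) := by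
      have e1 : |ε| * |ρ t| ≤ δ * (R + 1) :=
        mul_le_mul hε (by linarith) (abs_nonneg _) hδ.le
      have e2 : |ε| * |ρ t| * ‖v‖ ≤ (δ * (R + 1)) * (‖v‖ + 1) :=
        mul_le_mul e1 (by linarith) (norm_nonneg v) (by positivity)
      calc |ε| * |ρ t| * ‖v‖ ≤ (δ * (R + 1)) * (‖v‖ + 1) := e2
        _ = δ * ((R + 1) * (‖v‖ + 1)) := by ring
    have h3 : δ * ((R + 1) * (‖v‖ + 1)) < r := by
      rw [hδdef]
      rw [div_mul_eq_mul_div, div_lt_iff₀ (by positivity)]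
      nlinarith [mul_pos (by positivity : (0:ℝ) < (R+1)*(‖v‖+1)) hr]
    calc |ε| * |ρ t| * ‖v‖ ≤ δ * ((R + 1) * (‖v‖ + 1)) := h2
      _ < r := h3
  -- the perturbed curves and associated quantities
  set Z : ℝ → ℝ → (Fin M → ℝ) := fun ε t => x t + (ε * ρ t) • v with hZ
  set D : ℝ → ℝ → (Fin M → ℝ) := fun ε t => x' t + (ε * ρ' t) • v with hD
  set U : ℝ → ℝ → Fin N → ℝ :=
    fun ε t n => (∑ m, Fe n m (Z ε t) * D ε t m) - w t n with hU
  set G : ℝ → ℝ → ℝ := fun ε t => ∑ n, U ε t n * U ε t n with hG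
  set DU : ℝ → ℝ → Fin N → ℝ :=
    fun ε t n => ∑ m, (ρ t * fderiv ℝ (Fe n m) (Z ε t) v * D ε t m
      + Fe n m (Z ε t) * (ρ' t * v m)) with hDU
  set G' : ℝ → ℝ → ℝ :=
    fun ε t => ∑ n, (DU ε t n * U ε t n + U ε t n * DU ε t n) with hG'
  clear_value Z D U G DU G'
  -- membership of the perturbed curve in Ω
  have hZmem : ∀ ε : ℝ, |ε| ≤ δ → ∀ t ∈ I, Z ε t ∈ Ω := by
    simp only [hZ]; exact hmem
  -- smoothness of the perturbed curve in t
  have hZC1 : ∀ ε : ℝ, ContDiffOn ℝ 1 (fun t => Z ε t) I := by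
    simp only [hZ]
    intro ε
    exact hx.add (((contDiffOn_const (c := ε)).mul hρ).smul contDiffOn_const)
  have hZder : ∀ ε : ℝ, ∀ t ∈ I, HasDerivWithinAt (fun s => Z ε s) (D ε t) I t := by
    intro ε t htI
    have hxd : HasDerivWithinAt x (x' t) I t :=
      (hx.differentiableOn one_ne_zero t htI).hasDerivWithinAt
    have hρd : HasDerivWithinAt ρ (ρ' t) I t :=
      (hρ.differentiableOn one_ne_zero t htI).hasDerivWithinAt
    simp only [hZ, hD]
    exact hxd.add (((hρd.const_mul ε)).smul_const v)
  have hZderW : ∀ ε : ℝ, ∀ t ∈ I, derivWithin (fun s => Z ε s) I t = D ε t := by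
    intro ε t htI
    exact (hZder ε t htI).derivWithin (hUD t htI)
  -- rewriting the functional along the perturbed curve
  have hfuncE : ∀ ε : ℝ, funcE φ w t₀ t₁ (fun t => Z ε t) = ∫ t in t₀..t₁, G ε t := by
    intro ε
    apply intervalIntegral.integral_congr
    intro s hs
    rw [Set.uIcc_of_le ht.le] at hs
    rw [← hI] at hs
    show ((synthesisMat φ (Z ε s))ᵀ *ᵥ derivWithin (fun t => Z ε t) I s - w s) ⬝ᵥ
      ((synthesisMat φ (Z ε s))ᵀ *ᵥ derivWithin (fun t => Z ε t) I s - w s) = G ε s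
    rw [hZderW ε s hs]
    simp only [hG, hU, hZ, hD, dotProduct, Matrix.mulVec, Matrix.transpose_apply,
      synthesisMat, Matrix.of_apply, Pi.sub_apply, hFe]
  -- joint continuity on the compact tube E
  set E : Set (ℝ × ℝ) := Set.Icc (-δ) δ ×ˢ I with hE_def
  have hE : IsCompact E := isCompact_Icc.prod isCompact_Icc
  have hEmem : ∀ p ∈ E, |p.1| ≤ δ ∧ p.2 ∈ I := by
    rintro ⟨ε, t⟩ ⟨h1, h2⟩
    exact ⟨abs_le.2 ⟨h1.1, h1.2⟩, h2⟩
  have hZcont : ContinuousOn (fun p : ℝ × ℝ => Z p.1 p.2) E := by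
    simp only [hZ]
    apply ContinuousOn.add
    · exact hx.continuousOn.comp continuous_snd.continuousOn (fun p hp => (hEmem p hp).2)
    · apply ContinuousOn.fun_smul _ continuousOn_const
      exact continuous_fst.continuousOn.mul
        (hρ.continuousOn.comp continuous_snd.continuousOn (fun p hp => (hEmem p hp).2))
  have hZmaps : ∀ p ∈ E, Z p.1 p.2 ∈ Ω := by
    intro p hp
    exact hZmem p.1 (hEmem p hp).1 p.2 (hEmem p hp).2
  have cFe : ∀ n m, ContinuousOn (fun p : ℝ × ℝ => Fe n m (Z p.1 p.2)) E :=
    fun n m => (hFeCont n m).comp hZcont hZmaps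
  have cDFe : ∀ n m, ContinuousOn (fun p : ℝ × ℝ => fderiv ℝ (Fe n m) (Z p.1 p.2) v) E := by
    intro n m
    exact (ContinuousLinearMap.apply ℝ ℝ v).continuous.comp_continuousOn
      ((hDFeCont n m).comp hZcont hZmaps)
  have cD : ∀ m, ContinuousOn (fun p : ℝ × ℝ => D p.1 p.2 m) E := by
    intro m
    simp only [hD, Pi.add_apply, Pi.smul_apply, smul_eq_mul]
    apply ContinuousOn.add
    · exact (continuous_apply m).comp_continuousOn
        (hx'c.comp continuous_snd.continuousOn (fun p hp => (hEmem p hp).2))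
    · exact (continuous_fst.continuousOn.mul
        (hρ'c.comp continuous_snd.continuousOn (fun p hp => (hEmem p hp).2))).mul
        continuousOn_const
  have cρ : ContinuousOn (fun p : ℝ × ℝ => ρ p.2) E :=
    hρ.continuousOn.comp continuous_snd.continuousOn (fun p hp => (hEmem p hp).2)
  have cρ' : ContinuousOn (fun p : ℝ × ℝ => ρ' p.2) E :=
    hρ'c.comp continuous_snd.continuousOn (fun p hp => (hEmem p hp).2)
  have cw : ∀ n, ContinuousOn (fun p : ℝ × ℝ => w p.2 n) E := by
    intro n
    exact (continuous_apply n).comp_continuousOn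
      (hw.continuousOn.comp continuous_snd.continuousOn (fun p hp => (hEmem p hp).2))
  have cU : ∀ n, ContinuousOn (fun p : ℝ × ℝ => U p.1 p.2 n) E := by
    intro n
    simp only [hU]
    apply ContinuousOn.sub _ (cw n)
    exact continuousOn_finset_sum _ (fun m _ => (cFe n m).mul (cD m))
  have cDU : ∀ n, ContinuousOn (fun p : ℝ × ℝ => DU p.1 p.2 n) E := by
    intro n
    simp only [hDU]
    apply continuousOn_finset_sum
    intro m _
    exact ((cρ.mul (cDFe n m)).mul (cD m)).add ((cFe n m).mul (cρ'.mul continuousOn_const))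
  have cG : ContinuousOn (fun p : ℝ × ℝ => G p.1 p.2) E := by
    simp only [hG]
    exact continuousOn_finset_sum _ (fun n _ => (cU n).mul (cU n))
  have cG' : ContinuousOn (fun p : ℝ × ℝ => G' p.1 p.2) E := by
    simp only [hG']
    exact continuousOn_finset_sum _ (fun n _ => ((cDU n).mul (cU n)).add ((cU n).mul (cDU n)))
  obtain ⟨C, hC⟩ := hE.exists_bound_of_continuousOn cG'
  -- pointwise derivative in ε
  have hptD : ∀ t ∈ I, ∀ ε : ℝ, |ε| ≤ δ → HasDerivAt (fun e => G e t) (G' ε t) ε := by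
    intro t htI ε hε
    have hz : HasDerivAt (fun e : ℝ => Z e t) (ρ t • v) ε := by
      simp only [hZ]
      simpa using (((hasDerivAt_id ε).mul_const (ρ t)).smul_const v).const_add (x t)
    have hFez : ∀ n m, HasDerivAt (fun e => Fe n m (Z e t))
        (ρ t * fderiv ℝ (Fe n m) (Z ε t) v) ε := by
      intro n m
      have hdFe : DifferentiableAt ℝ (Fe n m) (Z ε t) :=
        hFeDiff n m _ (hZmem ε hε t htI)
      have h1 := hdFe.hasFDerivAt.comp_hasDerivAt ε hz
      have h2 : fderiv ℝ (Fe n m) (Z ε t) (ρ t • v)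
          = ρ t * fderiv ℝ (Fe n m) (Z ε t) v := by
        rw [ContinuousLinearMap.map_smul, smul_eq_mul]
      rw [← h2]
      exact h1
    have hdm : ∀ m, HasDerivAt (fun e => D e t m) (ρ' t * v m) ε := by
      intro m
      simp only [hD]
      show HasDerivAt (fun e : ℝ => (x' t + (e * ρ' t) • v) m) (ρ' t * v m) ε
      simp only [Pi.add_apply, Pi.smul_apply, smul_eq_mul]
      have : HasDerivAt (fun e : ℝ => x' t m + e * ρ' t * v m) (ρ' t * v m) ε := by
        simpa using (((hasDerivAt_id ε).mul_const (ρ' t)).mul_const (v m)).const_add (x' t m)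
      exact this
    have hu : ∀ n, HasDerivAt (fun e => U e t n) (DU ε t n) ε := by
      intro n
      simp only [hU, hDU]
      exact (HasDerivAt.fun_sum (fun m _ => (hFez n m).mul (hdm m))).sub_const (w t n)
    simp only [hG, hG']
    exact HasDerivAt.fun_sum (fun n _ => (hu n).mul (hu n))
  -- continuity in t for fixed ε
  have hGcont : ∀ ε : ℝ, |ε| ≤ δ → ContinuousOn (fun t => G ε t) I := by
    intro ε hε
    have : ContinuousOn (fun t : ℝ => (ε, t)) I := (continuous_const.prodMk continuous_id).continuousOn
    exact cG.comp this (fun t htI => ⟨abs_le.1 hε, htI⟩)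
  have hG'cont : ∀ ε : ℝ, |ε| ≤ δ → ContinuousOn (fun t => G' ε t) I := by
    intro ε hε
    have : ContinuousOn (fun t : ℝ => (ε, t)) I := (continuous_const.prodMk continuous_id).continuousOn
    exact cG'.comp this (fun t htI => ⟨abs_le.1 hε, htI⟩)
  -- derivative of the integral via dominated convergence
  have hkey : HasDerivAt (fun e => ∫ t in t₀..t₁, G e t) (∫ t in t₀..t₁, G' 0 t) 0 := by
    have h0δ : ∀ e : ℝ, e ∈ Metric.ball (0:ℝ) δ → |e| ≤ δ := by
      intro e he
      rw [Metric.mem_ball, Real.dist_eq, sub_zero] at he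
      exact he.le
    have hmeas : ∀ e : ℝ, |e| ≤ δ →
        AEStronglyMeasurable (fun t => G e t) (volume.restrict (Set.uIoc t₀ t₁)) := by
      intro e he
      rw [Set.uIoc_of_le ht.le]
      exact ((hGcont e he).mono Set.Ioc_subset_Icc_self).aestronglyMeasurable measurableSet_Ioc
    apply (intervalIntegral.hasDerivAt_integral_of_dominated_loc_of_deriv_le (Metric.ball_mem_nhds (0:ℝ) hδ)
      (F := G) (F' := G') (bound := fun _ => C) ?_ ?_ ?_ ?_ ?_ ?_).2
    · filter_upwards [Metric.ball_mem_nhds (0:ℝ) hδ] with e he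
      exact hmeas e (h0δ e he)
    · apply ContinuousOn.intervalIntegrable
      rw [Set.uIcc_of_le ht.le]
      exact hGcont 0 (by simpa using hδ.le)
    · rw [Set.uIoc_of_le ht.le]
      exact ((hG'cont 0 (by simpa using hδ.le)).mono
        Set.Ioc_subset_Icc_self).aestronglyMeasurable measurableSet_Ioc
    · apply Filter.Eventually.of_forall
      intro t htI e he
      rw [Set.uIoc_of_le ht.le] at htI
      have : ((e, t) : ℝ × ℝ) ∈ E := ⟨abs_le.1 (h0δ e he), Set.Ioc_subset_Icc_self htI⟩
      exact hC (e, t) this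
    · exact intervalIntegrable_const
    · apply Filter.Eventually.of_forall
      intro t htI e he
      rw [Set.uIoc_of_le ht.le] at htI
      exact hptD t (Set.Ioc_subset_Icc_self htI) e (h0δ e he)
  -- local minimum at ε = 0
  have hx0 : (fun t => Z 0 t) = x := by
    funext t
    simp [hZ]
  have hlocmin : IsLocalMin (fun e => ∫ t in t₀..t₁, G e t) 0 := by
    have : ∀ e : ℝ, |e| ≤ δ →
        (∫ t in t₀..t₁, G 0 t) ≤ ∫ t in t₀..t₁, G e t := by
      intro e he
      rw [← hfuncE e, ← hfuncE 0, hx0]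
      exact hmin (fun t => Z e t) (hZC1 e) (fun t htI => hZmem e he t htI)
    filter_upwards [Metric.ball_mem_nhds (0:ℝ) hδ] with e he
    rw [Metric.mem_ball, Real.dist_eq, sub_zero] at he
    exact this e he.le
  have hzero : (∫ t in t₀..t₁, G' 0 t) = 0 := hlocmin.hasDerivAt_eq_zero hkey
  -- identify G' 0 t with 2 * (ρ t * aF t + ρ' t * bF t)
  have hident : ∀ t ∈ I, G' 0 t
      = 2 * (ρ t * aF φ w t₀ t₁ x v t + ρ' t * bF φ w t₀ t₁ x v t) := by
    intro t htI
    have hZ0 : Z 0 t = x t := by simp [hZ]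
    have hD0 : D 0 t = x' t := by simp [hD]
    have hU0 : ∀ n, U 0 t n = gC φ w t₀ t₁ x t n := by
      intro n
      rw [hU]
      simp only [hZ0, hD0]
      simp [gC, Matrix.mulVec, dotProduct, Matrix.transpose_apply, synthesisMat,
        Matrix.of_apply, hFe, hx']
      rfl
    have hDU0 : ∀ n, DU 0 t n
        = ρ t * (∑ m, fderiv ℝ (Fe n m) (x t) v * x' t m)
          + ρ' t * (∑ m, Fe n m (x t) * v m) := by
      intro n
      rw [hDU]
      simp only [hZ0, hD0]
      rw [Finset.sum_add_distrib, Finset.mul_sum, Finset.mul_sum]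
      congr 1
      · exact Finset.sum_congr rfl (fun m _ => by ring)
      · exact Finset.sum_congr rfl (fun m _ => by ring)
    have haFb : aF φ w t₀ t₁ x v t
        = ∑ n, gC φ w t₀ t₁ x t n * ∑ m, fderiv ℝ (Fe n m) (x t) v * x' t m := by
      rw [aF, hFe, hx']
    have hbFb : bF φ w t₀ t₁ x v t
        = ∑ n, gC φ w t₀ t₁ x t n * ∑ m, Fe n m (x t) * v m := by
      rw [bF, hFe]
    rw [hG']
    show (∑ n, (DU 0 t n * U 0 t n + U 0 t n * DU 0 t n)) = _
    calc (∑ n, (DU 0 t n * U 0 t n + U 0 t n * DU 0 t n))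
        = ∑ n, ((2 * ρ t) * (gC φ w t₀ t₁ x t n * ∑ m, fderiv ℝ (Fe n m) (x t) v * x' t m)
            + (2 * ρ' t) * (gC φ w t₀ t₁ x t n * ∑ m, Fe n m (x t) * v m)) :=
          Finset.sum_congr rfl (fun n _ => by rw [hU0 n, hDU0 n]; ring)
      _ = (2 * ρ t) * (∑ n, gC φ w t₀ t₁ x t n * ∑ m, fderiv ℝ (Fe n m) (x t) v * x' t m)
            + (2 * ρ' t) * (∑ n, gC φ w t₀ t₁ x t n * ∑ m, Fe n m (x t) * v m) := by
          rw [Finset.sum_add_distrib, ← Finset.mul_sum, ← Finset.mul_sum]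
      _ = 2 * (ρ t * aF φ w t₀ t₁ x v t + ρ' t * bF φ w t₀ t₁ x v t) := by
          rw [haFb, hbFb]; ring
  -- conclude
  have h2X : (∫ t in t₀..t₁, G' 0 t)
      = 2 * ∫ t in t₀..t₁, (ρ t * aF φ w t₀ t₁ x v t + ρ' t * bF φ w t₀ t₁ x v t) := by
    rw [← intervalIntegral.integral_const_mul]
    apply intervalIntegral.integral_congr
    intro s hs
    rw [Set.uIcc_of_le ht.le] at hs
    exact hident s hs
  rw [hzero] at h2X
  linarith [h2X]

set_option maxHeartbeats 2000000 in
/-- Theorem 3 of the paper: Let `Ω ⊆ ℝ^M` be open, `φ₁,…,φ_N ∈ C²(Ω)`,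
`F(x)` the `M × N` matrix with `n`-th column `∇φ_n(x)`, and `w : [t₀, t₁] → ℝ^N` of class
`C¹`.  If `x ∈ C¹([t₀, t₁], Ω)` minimizes `Ê` over `C¹([t₀, t₁], Ω)`, then `x` satisfies
the Euler–Lagrange equation `F(x(t)) (d/dt)[Fᵀ(x(t))ẋ(t) − w(t)] = 0` for all
`t ∈ [t₀, t₁]`. -/
theorem stmt15 {M N : ℕ} {Ω : Set (Fin M → ℝ)} (hΩ : IsOpen Ω)
    (φ : Fin N → (Fin M → ℝ) → ℝ) (hφ : ∀ n, ContDiffOn ℝ 2 (φ n) Ω)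
    (t₀ t₁ : ℝ) (ht : t₀ < t₁)
    (w : ℝ → Fin N → ℝ) (hw : ContDiffOn ℝ 1 w (Set.Icc t₀ t₁))
    (x : ℝ → Fin M → ℝ) (hx : ContDiffOn ℝ 1 x (Set.Icc t₀ t₁))
    (hxΩ : ∀ t ∈ Set.Icc t₀ t₁, x t ∈ Ω)
    (hmin : ∀ y : ℝ → Fin M → ℝ, ContDiffOn ℝ 1 y (Set.Icc t₀ t₁) →
      (∀ t ∈ Set.Icc t₀ t₁, y t ∈ Ω) → funcE φ w t₀ t₁ x ≤ funcE φ w t₀ t₁ y) :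
    ∀ t ∈ Set.Icc t₀ t₁,
      synthesisMat φ (x t) *ᵥ
        derivWithin
          (fun s => (synthesisMat φ (x s))ᵀ *ᵥ derivWithin x (Set.Icc t₀ t₁) s - w s)
          (Set.Icc t₀ t₁) t = 0 := by
  intro t htI
  set I := Set.Icc t₀ t₁ with hI
  have hUD : UniqueDiffOn ℝ I := uniqueDiffOn_Icc ht
  set x' : ℝ → Fin M → ℝ := derivWithin x I with hx'
  have hx'c : ContinuousOn x' I := hx.continuousOn_derivWithin hUD le_rfl
  set Fe : Fin N → Fin M → (Fin M → ℝ) → ℝ :=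
    fun n m p => fderiv ℝ (φ n) p (Pi.single m 1) with hFe
  have hFeC1 : ∀ n m, ContDiffOn ℝ 1 (Fe n m) Ω := by
    intro n m
    have h1 : ContDiffOn ℝ 1 (fderiv ℝ (φ n)) Ω :=
      (hφ n).fderiv_of_isOpen hΩ (by norm_num)
    exact (ContinuousLinearMap.apply ℝ ℝ (Pi.single m 1)).contDiff.comp_contDiffOn h1
  have hFeCont : ∀ n m, ContinuousOn (Fe n m) Ω := fun n m => (hFeC1 n m).continuousOn
  have hDFeCont : ∀ n m, ContinuousOn (fun p => fderiv ℝ (Fe n m) p) Ω :=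
    fun n m => (hFeC1 n m).continuousOn_fderiv_of_isOpen hΩ le_rfl
  have hFeDiff : ∀ n m, ∀ p ∈ Ω, DifferentiableAt ℝ (Fe n m) p := by
    intro n m p hp
    exact ((hFeC1 n m).differentiableOn one_ne_zero).differentiableAt (hΩ.mem_nhds hp)
  -- components of g are continuous
  have hgEq : ∀ s, ∀ n, gC φ w t₀ t₁ x s n = (∑ k, Fe n k (x s) * x' s k) - w s n := by
    intro s n
    simp [gC, Matrix.mulVec, dotProduct, Matrix.transpose_apply, synthesisMat,
      Matrix.of_apply, hFe, hx']
    rfl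
  have cfex : ∀ n k, ContinuousOn (fun s => Fe n k (x s)) I :=
    fun n k => (hFeCont n k).comp hx.continuousOn hxΩ
  have cx'k : ∀ k, ContinuousOn (fun s => x' s k) I :=
    fun k => (continuous_apply k).comp_continuousOn hx'c
  have cwn : ∀ n, ContinuousOn (fun s => w s n) I :=
    fun n => (continuous_apply n).comp_continuousOn hw.continuousOn
  have cg : ∀ n, ContinuousOn (fun s => gC φ w t₀ t₁ x s n) I := by
    intro n
    apply ContinuousOn.congr (f := fun s => (∑ k, Fe n k (x s) * x' s k) - w s n)
      _ (fun s _ => hgEq s n)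
    exact (continuousOn_finset_sum _ (fun k _ => (cfex n k).mul (cx'k k))).sub (cwn n)
  have cDfex : ∀ n k (u : Fin M → ℝ), ContinuousOn (fun s => fderiv ℝ (Fe n k) (x s) u) I := by
    intro n k u
    exact (ContinuousLinearMap.apply ℝ ℝ u).continuous.comp_continuousOn
      ((hDFeCont n k).comp hx.continuousOn hxΩ)
  -- for each direction m we get a pointwise Euler-Lagrange relation via dbr
  have hEL : ∀ (m : Fin M), ∀ s ∈ I, HasDerivWithinAt
      (bF φ w t₀ t₁ x (Pi.single m 1)) (aF φ w t₀ t₁ x (Pi.single m 1) s) I s := by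
    intro m
    apply dbr_lemma ht
    · -- continuity of aF
      apply continuousOn_finset_sum
      intro n _
      apply ContinuousOn.mul (cg n)
      apply continuousOn_finset_sum
      intro k _
      exact (cDfex n k (Pi.single m 1)).mul (cx'k k)
    · -- continuity of bF
      apply continuousOn_finset_sum
      intro n _
      apply ContinuousOn.mul (cg n)
      apply continuousOn_finset_sum
      intro k _
      exact (cfex n k).mul continuousOn_const
    · -- the first variation vanishes
      intro ρ hρ
      exact firstvar hΩ φ hφ t₀ t₁ ht w hw x hx hxΩ hmin (Pi.single m 1) ρ hρ
  -- now the conclusion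
  show synthesisMat φ (x t) *ᵥ derivWithin (gC φ w t₀ t₁ x) I t = 0
  by_cases hdiff : DifferentiableWithinAt ℝ (gC φ w t₀ t₁ x) I t
  · set g' : Fin N → ℝ := derivWithin (gC φ w t₀ t₁ x) I t with hg'
    have hgd : ∀ n, HasDerivWithinAt (fun s => gC φ w t₀ t₁ x s n) (g' n) I t :=
      fun n => hasDerivWithinAt_pi.1 hdiff.hasDerivWithinAt n
    have hxd : HasDerivWithinAt x (x' t) I t :=
      (hx.differentiableOn one_ne_zero t htI).hasDerivWithinAt
    have hFex : ∀ n k, HasDerivWithinAt (fun s => Fe n k (x s))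
        (fderiv ℝ (Fe n k) (x t) (x' t)) I t := by
      intro n k
      exact (hFeDiff n k (x t) (hxΩ t htI)).hasFDerivAt.comp_hasDerivWithinAt t hxd
    funext m
    -- derivative of bF along the curve, computed by the product rule
    have hBsum : HasDerivWithinAt (bF φ w t₀ t₁ x (Pi.single m 1))
        (∑ n, (g' n * Fe n m (x t) + gC φ w t₀ t₁ x t n * fderiv ℝ (Fe n m) (x t) (x' t)))
        I t := by
      have hBEq : ∀ s, bF φ w t₀ t₁ x (Pi.single m 1) s
          = ∑ n, gC φ w t₀ t₁ x s n * Fe n m (x s) := by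
        intro s
        rw [bF]
        apply Finset.sum_congr rfl
        intro n _
        congr 1
        rw [hFe]
        simp [Pi.single_apply, mul_ite, Finset.sum_ite_eq']
      have h1 : HasDerivWithinAt (fun s => ∑ n, gC φ w t₀ t₁ x s n * Fe n m (x s))
          (∑ n, (g' n * Fe n m (x t) + gC φ w t₀ t₁ x t n * fderiv ℝ (Fe n m) (x t) (x' t)))
          I t := HasDerivWithinAt.fun_sum (fun n _ => (hgd n).mul (hFex n m))
      exact h1.congr (fun s _ => hBEq s) (hBEq t)
    -- uniqueness of the derivative
    have huniq : aF φ w t₀ t₁ x (Pi.single m 1) t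
        = ∑ n, (g' n * Fe n m (x t) + gC φ w t₀ t₁ x t n * fderiv ℝ (Fe n m) (x t) (x' t)) := by
      have d1 := (hEL m t htI).derivWithin (hUD t htI)
      have d2 := hBsum.derivWithin (hUD t htI)
      rw [d1] at d2
      exact d2
    -- second derivatives are symmetric (Clairaut) and linear in the direction
    have hDF : ∀ n, DifferentiableAt ℝ (fderiv ℝ (φ n)) (x t) := by
      intro n
      have h1 : ContDiffOn ℝ 1 (fderiv ℝ (φ n)) Ω :=
        (hφ n).fderiv_of_isOpen hΩ (by norm_num)
      exact (h1.differentiableOn one_ne_zero).differentiableAt (hΩ.mem_nhds (hxΩ t htI))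
    have hfd : ∀ n k (u : Fin M → ℝ), fderiv ℝ (Fe n k) (x t) u
        = fderiv ℝ (fderiv ℝ (φ n)) (x t) u (Pi.single k 1) := by
      intro n k u
      rw [hFe]
      rw [fderiv_clm_apply (hDF n) (differentiableAt_const _)]
      simp
    have hsym : ∀ n, IsSymmSndFDerivAt ℝ (φ n) (x t) := by
      intro n
      exact ((hφ n).contDiffAt (hΩ.mem_nhds (hxΩ t htI))).isSymmSndFDerivAt (by simp)
    have hxdecomp : x' t = ∑ k, x' t k • (Pi.single k 1 : Fin M → ℝ) := by
      conv_lhs => rw [← Finset.univ_sum_single (x' t)]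
      apply Finset.sum_congr rfl
      intro k _
      funext j
      simp [Pi.single_apply, mul_ite, mul_one, mul_zero]
    have hsum : ∀ n, fderiv ℝ (Fe n m) (x t) (x' t)
        = ∑ k, fderiv ℝ (Fe n m) (x t) (Pi.single k 1) * x' t k := by
      intro n
      conv_lhs => rw [hxdecomp]
      rw [map_sum]
      apply Finset.sum_congr rfl
      intro k _
      rw [ContinuousLinearMap.map_smul, smul_eq_mul, mul_comm]
    -- compute aF via symmetry of the second derivative
    have haFt : aF φ w t₀ t₁ x (Pi.single m 1) t
        = ∑ n, gC φ w t₀ t₁ x t n * fderiv ℝ (Fe n m) (x t) (x' t) := by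
      rw [aF]
      apply Finset.sum_congr rfl
      intro n _
      congr 1
      rw [hsum n]
      apply Finset.sum_congr rfl
      intro k _
      congr 1
      rw [show (fun p => fderiv ℝ (φ n) p (Pi.single k 1)) = Fe n k from by rw [hFe]]
      rw [hfd n k (Pi.single m 1), hfd n m (Pi.single k 1)]
      exact (hsym n).eq _ _
    have hfinal : ∑ n, g' n * Fe n m (x t) = 0 := by
      rw [haFt, Finset.sum_add_distrib] at huniq
      linarith
    show (synthesisMat φ (x t) *ᵥ g') m = (0 : Fin M → ℝ) m
    simp only [Matrix.mulVec, dotProduct, synthesisMat, Matrix.of_apply, Pi.zero_apply]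
    rw [← hfinal]
    apply Finset.sum_congr rfl
    intro n _
    rw [hFe, mul_comm]
  · rw [derivWithin_zero_of_not_differentiableWithinAt hdiff, Matrix.mulVec_zero]
end
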